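/- arXiv:2506.07226 — 5 statements merged into one kernel-verified Lean document; each statement's English description precedes it below -/
import Mathlib

section
/- Let S be a bounded linear operator on a complex Hilbert space H. Then max{ ‖ |S*| + (|S*|^{1/2}·|S|·|S*|^{1/2})^{1/2} ‖ , ‖ |S| + (|S|^{1/2}·|S*|·|S|^{1/2})^{1/2} ‖ } ≤ ‖S‖ + r(|S|·|S*|)^{1/2}, and consequently ω(S) ≤ (1/2)·( ‖S‖ + r(|S|·|S*|)^{1/2} ). -/
/-- `|S| = (S* S)^{1/2}`, via the continuous functional calculus. -/
noncomputable def absOp {H : Type*} [NormedAddCommGroup H] [InnerProductSpace ℂ H]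
    [CompleteSpace H] (S : H →L[ℂ] H) : H →L[ℂ] H :=
  CFC.sqrt (ContinuousLinearMap.adjoint S * S)

/-- `Re S = (S + S*)/2`. -/
noncomputable def reOp {H : Type*} [NormedAddCommGroup H] [InnerProductSpace ℂ H]
    [CompleteSpace H] (S : H →L[ℂ] H) : H →L[ℂ] H :=
  (2⁻¹ : ℂ) • (S + ContinuousLinearMap.adjoint S)

/-- `Im S = (S - S*)/(2i)`. -/
noncomputable def imOp {H : Type*} [NormedAddCommGroup H] [InnerProductSpace ℂ H]
    [CompleteSpace H] (S : H →L[ℂ] H) : H →L[ℂ] H :=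
  (2 * Complex.I)⁻¹ • (S - ContinuousLinearMap.adjoint S)

/-- Numerical radius `ω(S) = sup {|⟨Sx,x⟩| : ‖x‖ = 1}`. -/
noncomputable def numRadius {H : Type*} [NormedAddCommGroup H] [InnerProductSpace ℂ H]
    [CompleteSpace H] (S : H →L[ℂ] H) : ℝ :=
  ⨆ x : {x : H // ‖x‖ = 1}, ‖(inner ℂ (S x) (x : H) : ℂ)‖

/-- Spectral radius, as a real number. -/
noncomputable def specRad {H : Type*} [NormedAddCommGroup H] [InnerProductSpace ℂ H]
    [CompleteSpace H] (S : H →L[ℂ] H) : ℝ :=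
  (spectralRadius ℂ S).toReal

section Auxiliary

set_option synthInstance.maxHeartbeats 1000000
set_option maxHeartbeats 1000000

open ContinuousLinearMap Polynomial RCLike

variable {H : Type*} [NormedAddCommGroup H] [InnerProductSpace ℂ H] [CompleteSpace H]

private lemma myPow (a b v : H →L[ℂ] H) (hv : v * a = b * v) (n : ℕ) :
    v * a ^ n = b ^ n * v := by
  induction n with
  | zero => simp
  | succ n ih =>
    rw [pow_succ, pow_succ, ← mul_assoc, ih, mul_assoc, hv, ← mul_assoc]

private lemma myAeval (a b v : H →L[ℂ] H) (hv : v * a = b * v) (p : ℝ[X]) :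
    v * (aeval a p) = (aeval b p) * v := by
  induction p using Polynomial.induction_on' with
  | add p q hp hq => simp [mul_add, add_mul, hp, hq]
  | monomial n c =>
    simp only [aeval_monomial]
    rw [← mul_assoc, ← Algebra.commutes, mul_assoc, myPow a b v hv, ← mul_assoc,
      Algebra.commutes, mul_assoc]

/-- Intertwining passes through the real continuous functional calculus. -/
lemma cfc_intertwine (a b v : H →L[ℂ] H) (ha : IsSelfAdjoint a) (hb : IsSelfAdjoint b)
    (hv : v * a = b * v) (f : ℝ → ℝ) (hf : Continuous f) :
    v * cfc f a = cfc f b * v := by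
  have key : ∀ ε : ℝ, 0 < ε → ‖v * cfc f a - cfc f b * v‖ ≤ 2 * ‖v‖ * ε := by
    intro ε hε
    set R : ℝ := max ‖a‖ ‖b‖ * ‖(1 : H →L[ℂ] H)‖ with hR
    have hone : (0:ℝ) ≤ ‖(1 : H →L[ℂ] H)‖ := norm_nonneg _
    set K : Set ℝ := Set.Icc (-R) R with hK
    -- spectra are inside K
    have hKa : spectrum ℝ a ⊆ K := by
      intro t ht
      have h1 := spectrum.norm_le_norm_mul_of_mem ht
      rw [Real.norm_eq_abs, abs_le] at h1
      have h2 : ‖a‖ * ‖(1 : H →L[ℂ] H)‖ ≤ R := by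
        rw [hR]; gcongr; exact le_max_left _ _
      exact ⟨by linarith [h1.1], by linarith [h1.2]⟩
    have hKb : spectrum ℝ b ⊆ K := by
      intro t ht
      have h1 := spectrum.norm_le_norm_mul_of_mem ht
      rw [Real.norm_eq_abs, abs_le] at h1
      have h2 : ‖b‖ * ‖(1 : H →L[ℂ] H)‖ ≤ R := by
        rw [hR]; gcongr; exact le_max_right _ _
      exact ⟨by linarith [h1.1], by linarith [h1.2]⟩
    -- polynomial approximation on K
    have hdense : (polynomialFunctions K).topologicalClosure = ⊤ :=
      polynomialFunctions_closure_eq_top (-R) R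
    set fK : C(K, ℝ) := ⟨K.restrict f, hf.continuousOn.restrict⟩ with hfK
    have hmem : fK ∈ closure ((polynomialFunctions K : Subalgebra ℝ C(K, ℝ)) : Set C(K, ℝ)) := by
      rw [← Subalgebra.topologicalClosure_coe, hdense]
      trivial
    obtain ⟨g, hg, hdist⟩ := Metric.mem_closure_iff.mp hmem ε hε
    rw [polynomialFunctions_coe] at hg
    obtain ⟨p, rfl⟩ := hg
    have happrox : ∀ t ∈ K, |f t - p.eval t| ≤ ε := by
      intro t ht
      have := ContinuousMap.dist_apply_le_dist (f := fK) (g := p.toContinuousMapOnAlgHom K) ⟨t, ht⟩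
      have h2 : dist (fK ⟨t, ht⟩) ((p.toContinuousMapOnAlgHom K) ⟨t, ht⟩) ≤ ε :=
        this.trans hdist.le
      have e : fK ⟨t, ht⟩ = f t := rfl
      simpa [Real.dist_eq, e, Polynomial.toContinuousMapOnAlgHom,
        Polynomial.toContinuousMapOn, Polynomial.toContinuousMap] using h2
    -- cfc bounds
    have hna : ‖cfc f a - cfc p.eval a‖ ≤ ε := by
      rw [← cfc_sub f p.eval a]
      exact norm_cfc_le hε.le fun t ht => by
        simpa [Real.norm_eq_abs] using happrox t (hKa ht)
    have hnb : ‖cfc f b - cfc p.eval b‖ ≤ ε := by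
      rw [← cfc_sub f p.eval b]
      exact norm_cfc_le hε.le fun t ht => by
        simpa [Real.norm_eq_abs] using happrox t (hKb ht)
    have hpoly : v * cfc p.eval a = cfc p.eval b * v := by
      rw [cfc_polynomial p a, cfc_polynomial p b]; exact myAeval a b v hv p
    have hnb' : ‖cfc p.eval b - cfc f b‖ ≤ ε := by rwa [norm_sub_rev]
    calc ‖v * cfc f a - cfc f b * v‖
        = ‖v * (cfc f a - cfc p.eval a) + ((cfc p.eval b - cfc f b) * v
            + (v * cfc p.eval a - cfc p.eval b * v))‖ := by
          congr 1
          noncomm_ring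
      _ ≤ ‖v * (cfc f a - cfc p.eval a)‖ + (‖(cfc p.eval b - cfc f b) * v‖
            + ‖v * cfc p.eval a - cfc p.eval b * v‖) :=
          (norm_add_le _ _).trans (by gcongr; exact norm_add_le _ _)
      _ ≤ ‖v‖ * ε + (ε * ‖v‖ + 0) := by
          rw [hpoly, sub_self, norm_zero]
          gcongr ?_ + (?_ + ?_)
          case h₂ => exact le_refl 0
          · exact (norm_mul_le _ _).trans (by gcongr)
          · exact (norm_mul_le _ _).trans (by gcongr)
      _ ≤ 2 * ‖v‖ * ε := by nlinarith [norm_nonneg v]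
  have : ‖v * cfc f a - cfc f b * v‖ ≤ 0 := by
    refine le_of_forall_pos_le_add ?_
    intro ε hε
    have h2 : 0 < ε / (2 * ‖v‖ + 1) := by positivity
    calc ‖v * cfc f a - cfc f b * v‖ ≤ 2 * ‖v‖ * (ε / (2 * ‖v‖ + 1)) := key _ h2
      _ ≤ 0 + ε := by
          rw [zero_add]
          rw [div_eq_inv_mul, ← mul_assoc]
          have h3 : 2 * ‖v‖ * (2 * ‖v‖ + 1)⁻¹ ≤ 1 := by
            rw [mul_inv_le_iff₀ (by positivity), one_mul]; linarith [norm_nonneg v]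
          nlinarith
  have := le_antisymm this (norm_nonneg _)
  rwa [norm_eq_zero, sub_eq_zero] at this

lemma cfc_real_sqrt (a : H →L[ℂ] H) (ha : 0 ≤ a) : CFC.sqrt a = cfc Real.sqrt a := by
  have hsa : IsSelfAdjoint a := ha.isSelfAdjoint
  have h1 : cfc Real.sqrt a * cfc Real.sqrt a = a := by
    rw [← cfc_mul Real.sqrt Real.sqrt a]
    have h2 : cfc (fun x => Real.sqrt x * Real.sqrt x) a = cfc (id : ℝ → ℝ) a :=
      cfc_congr fun t ht => Real.mul_self_sqrt (spectrum_nonneg_of_nonneg ha ht)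
    rw [h2, cfc_id ℝ a]
  exact CFC.sqrt_unique h1 (cfc_nonneg fun t _ => Real.sqrt_nonneg t)

lemma norm_CFC_sqrt (a : H →L[ℂ] H) (ha : 0 ≤ a) : ‖CFC.sqrt a‖ = Real.sqrt ‖a‖ := by
  have h := CStarRing.norm_star_mul_self (x := CFC.sqrt a)
  rw [(IsSelfAdjoint.of_nonneg (CFC.sqrt_nonneg (a := a))).star_eq,
    CFC.sqrt_mul_sqrt_self a ha] at h
  rw [h, Real.sqrt_mul_self (norm_nonneg _)]

lemma adjoint_mul_self_nonneg (S : H →L[ℂ] H) : 0 ≤ ContinuousLinearMap.adjoint S * S := by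
  have := star_mul_self_nonneg S
  rwa [star_eq_adjoint] at this

lemma absOp_nonneg (S : H →L[ℂ] H) : 0 ≤ absOp S := CFC.sqrt_nonneg _

lemma absOp_sq (S : H →L[ℂ] H) : absOp S * absOp S = ContinuousLinearMap.adjoint S * S :=
  CFC.sqrt_mul_sqrt_self _ (adjoint_mul_self_nonneg S)

lemma norm_absOp (S : H →L[ℂ] H) : ‖absOp S‖ = ‖S‖ := by
  rw [absOp, norm_CFC_sqrt _ (adjoint_mul_self_nonneg S), ← star_eq_adjoint,
    CStarRing.norm_star_mul_self, Real.sqrt_mul_self (norm_nonneg _)]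

lemma specRad_selfAdjoint (a : H →L[ℂ] H) (ha : IsSelfAdjoint a) : specRad a = ‖a‖ := by
  rw [specRad, ha.spectralRadius_eq_nnnorm]
  simp

lemma spectralRadius_mul_comm' {A' : Type*} [NormedRing A'] [NormedAlgebra ℂ A'] (a b : A') :
    spectralRadius ℂ (a * b) = spectralRadius ℂ (b * a) := by
  have key : ∀ c d : A', spectralRadius ℂ (c * d) ≤ spectralRadius ℂ (d * c) := by
    intro c d
    rw [spectralRadius, spectralRadius]
    refine iSup₂_le fun k hk => ?_
    rcases eq_or_ne k 0 with rfl | h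
    · simp
    · have hmem : k ∈ spectrum ℂ (d * c) := by
        have hswap : spectrum ℂ (c * d) \ {0} = spectrum ℂ (d * c) \ {0} :=
          spectrum.nonzero_mul_comm c d
        have hk2 : k ∈ spectrum ℂ (c * d) \ {0} := ⟨hk, h⟩
        rw [hswap] at hk2
        exact hk2.1
      exact le_iSup₂ (f := fun (k : ℂ) (_ : k ∈ spectrum ℂ (d * c)) => (‖k‖₊ : ENNReal)) k hmem
  exact le_antisymm (key a b) (key b a)

lemma specRad_mul_comm (a b : H →L[ℂ] H) : specRad (a * b) = specRad (b * a) := by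
  rw [specRad, specRad, spectralRadius_mul_comm']

lemma sqrt_intertwine (a b v : H →L[ℂ] H) (ha : 0 ≤ a) (hb : 0 ≤ b) (hv : v * a = b * v) :
    v * CFC.sqrt a = CFC.sqrt b * v := by
  rw [cfc_real_sqrt a ha, cfc_real_sqrt b hb]
  exact cfc_intertwine a b v ha.isSelfAdjoint hb.isSelfAdjoint hv Real.sqrt Real.continuous_sqrt

lemma self_mul_adjoint_nonneg (S : H →L[ℂ] H) : 0 ≤ S * ContinuousLinearMap.adjoint S := by
  have := star_mul_self_nonneg (ContinuousLinearMap.adjoint S)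
  rwa [star_eq_adjoint, adjoint_adjoint] at this

lemma absOp_adjoint_eq (S : H →L[ℂ] H) :
    absOp (ContinuousLinearMap.adjoint S) = CFC.sqrt (S * ContinuousLinearMap.adjoint S) := by
  rw [absOp, adjoint_adjoint]

lemma mul_absOp (S : H →L[ℂ] H) : S * absOp S = absOp (ContinuousLinearMap.adjoint S) * S := by
  rw [absOp, absOp_adjoint_eq]
  exact sqrt_intertwine _ _ _ (adjoint_mul_self_nonneg S) (self_mul_adjoint_nonneg S)
    (mul_assoc _ _ _).symm

lemma sqrt_nonneg' (a : H →L[ℂ] H) : 0 ≤ CFC.sqrt a := CFC.sqrt_nonneg _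

lemma sqrt_selfAdjoint (a : H →L[ℂ] H) : IsSelfAdjoint (CFC.sqrt a) :=
  IsSelfAdjoint.of_nonneg (sqrt_nonneg' a)

lemma conj_sqrt_nonneg (A B : H →L[ℂ] H) (hA : 0 ≤ A) :
    0 ≤ CFC.sqrt B * A * CFC.sqrt B := by
  have := star_left_conjugate_nonneg hA (CFC.sqrt B)
  rwa [(sqrt_selfAdjoint B).star_eq] at this

lemma norm_conj_sqrt (A B : H →L[ℂ] H) (hA : 0 ≤ A) (hB : 0 ≤ B) :
    ‖CFC.sqrt B * A * CFC.sqrt B‖ = specRad (A * B) := by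
  rw [← specRad_selfAdjoint _ (conj_sqrt_nonneg A B hA).isSelfAdjoint, mul_assoc,
    specRad_mul_comm, mul_assoc, CFC.sqrt_mul_sqrt_self B hB]

lemma norm_sqrt_mul_sqrt (A B : H →L[ℂ] H) (hA : 0 ≤ A) (hB : 0 ≤ B) :
    ‖CFC.sqrt A * CFC.sqrt B‖ = Real.sqrt (specRad (A * B)) := by
  have h := CStarRing.norm_star_mul_self (x := CFC.sqrt A * CFC.sqrt B)
  rw [star_mul, (sqrt_selfAdjoint A).star_eq, (sqrt_selfAdjoint B).star_eq] at h
  have h2 : CFC.sqrt B * CFC.sqrt A * (CFC.sqrt A * CFC.sqrt B) = CFC.sqrt B * A * CFC.sqrt B := by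
    rw [mul_assoc, ← mul_assoc (CFC.sqrt A), CFC.sqrt_mul_sqrt_self A hA, ← mul_assoc, mul_assoc]
  rw [h2, norm_conj_sqrt A B hA hB] at h
  rw [h, Real.sqrt_mul_self (norm_nonneg _)]

/-! ### The two-by-two operator matrix trick -/

noncomputable def rowOp (P Q : H →L[ℂ] H) : WithLp 2 (H × H) →L[ℂ] H :=
  (P.comp (ContinuousLinearMap.fst ℂ H H) + Q.comp (ContinuousLinearMap.snd ℂ H H)).comp
    (WithLp.prodContinuousLinearEquiv 2 ℂ H H : WithLp 2 (H × H) →L[ℂ] H × H)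

noncomputable def colOp (P Q : H →L[ℂ] H) : H →L[ℂ] WithLp 2 (H × H) :=
  (((WithLp.prodContinuousLinearEquiv 2 ℂ H H).symm : H × H →L[ℂ] WithLp 2 (H × H))).comp
    (P.prod Q)

lemma rowOp_apply (P Q : H →L[ℂ] H) (z : WithLp 2 (H × H)) :
    rowOp P Q z = P z.fst + Q z.snd := by
  simp [rowOp]

lemma colOp_apply (P Q : H →L[ℂ] H) (x : H) :
    colOp P Q x = (WithLp.equiv 2 (H × H)).symm (P x, Q x) := by
  simp [colOp]

lemma adjoint_rowOp (P Q : H →L[ℂ] H) :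
    ContinuousLinearMap.adjoint (rowOp P Q) =
      colOp (ContinuousLinearMap.adjoint P) (ContinuousLinearMap.adjoint Q) := by
  symm
  rw [eq_adjoint_iff]
  intro x z
  rw [colOp_apply, rowOp_apply, WithLp.prod_inner_apply]
  simp only [WithLp.equiv_symm_apply, WithLp.toLp_fst, WithLp.toLp_snd]
  rw [inner_add_right, adjoint_inner_left, adjoint_inner_left]
  rfl

noncomputable def blkOp (P Q R T : H →L[ℂ] H) : WithLp 2 (H × H) →L[ℂ] WithLp 2 (H × H) :=
  (((WithLp.prodContinuousLinearEquiv 2 ℂ H H).symm : H × H →L[ℂ] WithLp 2 (H × H))).comp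
    ((((P.comp (ContinuousLinearMap.fst ℂ H H) + Q.comp (ContinuousLinearMap.snd ℂ H H))).prod
      ((R.comp (ContinuousLinearMap.fst ℂ H H) + T.comp (ContinuousLinearMap.snd ℂ H H)))).comp
      (WithLp.prodContinuousLinearEquiv 2 ℂ H H : WithLp 2 (H × H) →L[ℂ] H × H))

lemma blkOp_apply (P Q R T : H →L[ℂ] H) (z : WithLp 2 (H × H)) :
    blkOp P Q R T z = (WithLp.equiv 2 (H × H)).symm (P z.fst + Q z.snd, R z.fst + T z.snd) := by
  simp [blkOp]

lemma norm_sq_withLp (z : WithLp 2 (H × H)) : ‖z‖ ^ 2 = ‖z.fst‖ ^ 2 + ‖z.snd‖ ^ 2 :=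
  WithLp.prod_norm_sq_eq_of_L2 z

lemma blkOp_diag_norm (P T : H →L[ℂ] H) : ‖blkOp P 0 0 T‖ ≤ max ‖P‖ ‖T‖ := by
  refine opNorm_le_bound _ (le_max_iff.mpr (Or.inl (norm_nonneg P))) fun z => ?_
  have h1 : ‖blkOp P 0 0 T z‖ ^ 2 = ‖P z.fst‖ ^ 2 + ‖T z.snd‖ ^ 2 := by
    rw [blkOp_apply, norm_sq_withLp]
    simp
  have h2 := norm_sq_withLp z
  have hP := le_opNorm P z.fst
  have hT := le_opNorm T z.snd
  have hmax1 : ‖P‖ ≤ max ‖P‖ ‖T‖ := le_max_left _ _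
  have hmax2 : ‖T‖ ≤ max ‖P‖ ‖T‖ := le_max_right _ _
  have key : ‖blkOp P 0 0 T z‖ ^ 2 ≤ (max ‖P‖ ‖T‖ * ‖z‖) ^ 2 := by
    rw [h1]
    have e1 : ‖P z.fst‖ ^ 2 ≤ (max ‖P‖ ‖T‖) ^ 2 * ‖z.fst‖ ^ 2 := by
      rw [← mul_pow]
      have : ‖P z.fst‖ ≤ max ‖P‖ ‖T‖ * ‖z.fst‖ :=
        hP.trans (by gcongr)
      exact pow_le_pow_left₀ (norm_nonneg _) this 2
    have e2 : ‖T z.snd‖ ^ 2 ≤ (max ‖P‖ ‖T‖) ^ 2 * ‖z.snd‖ ^ 2 := by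
      rw [← mul_pow]
      have : ‖T z.snd‖ ≤ max ‖P‖ ‖T‖ * ‖z.snd‖ :=
        hT.trans (by gcongr)
      exact pow_le_pow_left₀ (norm_nonneg _) this 2
    rw [mul_pow, h2]
    nlinarith
  exact pow_le_pow_iff_left₀ (norm_nonneg _) (by positivity) (two_ne_zero) |>.mp key

lemma blkOp_off_norm (Q R : H →L[ℂ] H) (h : ‖R‖ ≤ ‖Q‖) : ‖blkOp 0 Q R 0‖ ≤ ‖Q‖ := by
  refine opNorm_le_bound _ ((norm_nonneg R).trans h) fun z => ?_
  have h1 : ‖blkOp 0 Q R 0 z‖ ^ 2 = ‖Q z.snd‖ ^ 2 + ‖R z.fst‖ ^ 2 := by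
    rw [blkOp_apply, norm_sq_withLp]
    simp
  have h2 := norm_sq_withLp z
  have hQ := le_opNorm Q z.snd
  have hR := le_opNorm R z.fst
  have key : ‖blkOp 0 Q R 0 z‖ ^ 2 ≤ (‖Q‖ * ‖z‖) ^ 2 := by
    rw [h1, mul_pow, h2]
    have e1 : ‖Q z.snd‖ ^ 2 ≤ ‖Q‖ ^ 2 * ‖z.snd‖ ^ 2 := by
      rw [← mul_pow]; exact pow_le_pow_left₀ (norm_nonneg _) hQ 2
    have e2 : ‖R z.fst‖ ^ 2 ≤ ‖Q‖ ^ 2 * ‖z.fst‖ ^ 2 := by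
      rw [← mul_pow]
      refine pow_le_pow_left₀ (norm_nonneg _) (hR.trans ?_) 2
      gcongr
    nlinarith
  exact pow_le_pow_iff_left₀ (norm_nonneg _) (by positivity) (two_ne_zero) |>.mp key

/-- Kittaneh's inequality: `‖A + B‖ ≤ max ‖A‖ ‖B‖ + ‖A^{1/2} B^{1/2}‖` for positive `A, B`. -/
lemma kittaneh_sum (A B : H →L[ℂ] H) (hA : 0 ≤ A) (hB : 0 ≤ B) :
    ‖A + B‖ ≤ max ‖A‖ ‖B‖ + ‖CFC.sqrt A * CFC.sqrt B‖ := by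
  set sA := CFC.sqrt A with hsA
  set sB := CFC.sqrt B with hsB
  set row := rowOp sA sB with hrow
  have hadj : ContinuousLinearMap.adjoint row = colOp sA sB := by
    rw [hrow, adjoint_rowOp]
    rw [isSelfAdjoint_iff'.mp (sqrt_selfAdjoint A), isSelfAdjoint_iff'.mp (sqrt_selfAdjoint B)]
  have h1 : row ∘L ContinuousLinearMap.adjoint row = A + B := by
    ext x
    rw [hadj, comp_apply, colOp_apply, rowOp_apply]
    simp only [WithLp.equiv_symm_apply, WithLp.toLp_fst, WithLp.toLp_snd]
    have e1 : sA (sA x) = A x := by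
      rw [← ContinuousLinearMap.mul_apply, hsA, CFC.sqrt_mul_sqrt_self A hA]
    have e2 : sB (sB x) = B x := by
      rw [← ContinuousLinearMap.mul_apply, hsB, CFC.sqrt_mul_sqrt_self B hB]
    rw [e1, e2]
    rfl
  have h2 : ContinuousLinearMap.adjoint row ∘L row = blkOp A (sA * sB) (sB * sA) B := by
    ext z
    rw [hadj, comp_apply, colOp_apply, rowOp_apply, blkOp_apply]
    apply (WithLp.equiv 2 (H × H)).symm.congr_arg
    have e1 : sA (sA z.fst + sB z.snd) = A z.fst + (sA * sB) z.snd := by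
      rw [map_add, ← ContinuousLinearMap.mul_apply, hsA, CFC.sqrt_mul_sqrt_self A hA,
        ContinuousLinearMap.mul_apply]
    have e2 : sB (sA z.fst + sB z.snd) = (sB * sA) z.fst + B z.snd := by
      rw [map_add, ← ContinuousLinearMap.mul_apply sB sB, hsB, CFC.sqrt_mul_sqrt_self B hB,
        ContinuousLinearMap.mul_apply]
    rw [e1, e2]
  have hsplit : blkOp A (sA * sB) (sB * sA) B = blkOp A 0 0 B + blkOp 0 (sA * sB) (sB * sA) 0 := by
    ext z
    rw [ContinuousLinearMap.add_apply, blkOp_apply, blkOp_apply, blkOp_apply,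
      WithLp.equiv_symm_apply, ← WithLp.toLp_add]
    apply (WithLp.equiv 2 (H × H)).symm.congr_arg
    simp only [ContinuousLinearMap.zero_apply, add_zero, zero_add, Prod.mk_add_mk]
    exact Prod.ext rfl (add_comm _ _)
  have hRQ : ‖sB * sA‖ = ‖sA * sB‖ := by
    have : star (sA * sB) = sB * sA := by
      rw [star_mul, (sqrt_selfAdjoint A).star_eq, (sqrt_selfAdjoint B).star_eq]
    rw [← this, norm_star]
  have hnorm : ‖A + B‖ = ‖ContinuousLinearMap.adjoint row ∘L row‖ := by
    rw [norm_adjoint_comp_self row, ← h1]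
    have := norm_adjoint_comp_self (ContinuousLinearMap.adjoint row)
    rw [adjoint_adjoint] at this
    rw [this, LinearIsometryEquiv.norm_map]
  calc ‖A + B‖ = ‖ContinuousLinearMap.adjoint row ∘L row‖ := hnorm
    _ = ‖blkOp A 0 0 B + blkOp 0 (sA * sB) (sB * sA) 0‖ := by rw [h2, hsplit]
    _ ≤ ‖blkOp A 0 0 B‖ + ‖blkOp 0 (sA * sB) (sB * sA) 0‖ := norm_add_le _ _
    _ ≤ max ‖A‖ ‖B‖ + ‖sA * sB‖ :=
        add_le_add (blkOp_diag_norm A B) (blkOp_off_norm _ _ hRQ.le)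

/-! ### The mixed Schwarz inequality -/

lemma mixed_schwarz_eps (S : H →L[ℂ] H) (x : H) (hx : ‖x‖ = 1) {ε : ℝ} (hε : 0 < ε) :
    ‖(inner ℂ (S x) x : ℂ)‖ ^ 2 ≤
      (re (inner ℂ (absOp S x) x : ℂ) + ε) *
        re (inner ℂ (absOp (ContinuousLinearMap.adjoint S) x) x : ℂ) := by
  set A := absOp S with hA
  set B := absOp (ContinuousLinearMap.adjoint S) with hB
  have hA0 : 0 ≤ A := absOp_nonneg S
  have hB0 : 0 ≤ B := absOp_nonneg _
  have hσA : ∀ t ∈ spectrum ℝ A, 0 ≤ t := fun t ht => spectrum_nonneg_of_nonneg hA0 ht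
  have hσB : ∀ t ∈ spectrum ℝ B, 0 ≤ t := fun t ht => spectrum_nonneg_of_nonneg hB0 ht
  -- continuous functions
  have hc0 : Continuous fun t : ℝ => |t| + ε := continuous_abs.add continuous_const
  have hpos : ∀ t : ℝ, 0 < |t| + ε := fun t => by positivity
  have hc1 : Continuous fun t : ℝ => Real.sqrt (|t| + ε) := Real.continuous_sqrt.comp hc0
  have hsqrtpos : ∀ t : ℝ, 0 < Real.sqrt (|t| + ε) := fun t => Real.sqrt_pos.mpr (hpos t)
  have hc2 : Continuous fun t : ℝ => (Real.sqrt (|t| + ε))⁻¹ :=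
    hc1.inv₀ fun t => (hsqrtpos t).ne'
  have hc3 : Continuous fun t : ℝ => (|t| + ε)⁻¹ := hc0.inv₀ fun t => (hpos t).ne'
  set P := cfc (fun t : ℝ => Real.sqrt (|t| + ε)) A with hP
  set Q := cfc (fun t : ℝ => (Real.sqrt (|t| + ε))⁻¹) A with hQ
  have hPsa : IsSelfAdjoint P := cfc_predicate _ A
  have hQsa : IsSelfAdjoint Q := cfc_predicate _ A
  have hQP : Q * P = 1 := by
    rw [hQ, hP, ← cfc_mul _ _ A (hc2.continuousOn) (hc1.continuousOn)]
    have : cfc (fun t : ℝ => (Real.sqrt (|t| + ε))⁻¹ * Real.sqrt (|t| + ε)) A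
        = cfc (fun _ : ℝ => (1 : ℝ)) A :=
      cfc_congr fun t _ => inv_mul_cancel₀ (hsqrtpos t).ne'
    rw [this, cfc_const_one ℝ A]
  have hPP : P * P = A + algebraMap ℝ (H →L[ℂ] H) ε := by
    rw [hP, ← cfc_mul _ _ A (hc1.continuousOn) (hc1.continuousOn)]
    have h1 : cfc (fun t : ℝ => Real.sqrt (|t| + ε) * Real.sqrt (|t| + ε)) A
        = cfc (fun t : ℝ => t + ε) A := by
      refine cfc_congr fun t ht => ?_
      rw [Real.mul_self_sqrt (hpos t).le, abs_of_nonneg (hσA t ht)]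
    rw [h1, cfc_add A (fun t : ℝ => t) (fun _ : ℝ => ε) (continuous_id.continuousOn)
      (continuous_const.continuousOn), cfc_id' ℝ A, cfc_const ε A]
  have hQQ : Q * Q = cfc (fun t : ℝ => (|t| + ε)⁻¹) A := by
    rw [hQ, ← cfc_mul _ _ A (hc2.continuousOn) (hc2.continuousOn)]
    refine cfc_congr fun t _ => ?_
    rw [← mul_inv, Real.mul_self_sqrt (hpos t).le]
  -- the operator M = S (Q*Q) S†  is ≤ B
  set Sd := ContinuousLinearMap.adjoint S with hSd
  have hSA : S * A = B * S := mul_absOp S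
  have hSF : S * cfc (fun t : ℝ => (|t| + ε)⁻¹) A = cfc (fun t : ℝ => (|t| + ε)⁻¹) B * S :=
    cfc_intertwine A B S hA0.isSelfAdjoint hB0.isSelfAdjoint hSA _ hc3
  have hBB : S * Sd = B * B := by
    rw [hB, absOp_sq, adjoint_adjoint]
  have hM : S * (Q * Q) * Sd ≤ B := by
    rw [hQQ, hSF, mul_assoc, hBB, ← mul_assoc]
    calc cfc (fun t : ℝ => (|t| + ε)⁻¹) B * B * B
        = cfc (fun t : ℝ => (|t| + ε)⁻¹ * t * t) B := by
          rw [cfc_mul (fun t : ℝ => (|t| + ε)⁻¹ * t) (fun t : ℝ => t) B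
            ((hc3.mul continuous_id).continuousOn) (continuous_id.continuousOn),
            cfc_mul (fun t : ℝ => (|t| + ε)⁻¹) (fun t : ℝ => t) B
            (hc3.continuousOn) (continuous_id.continuousOn), cfc_id' ℝ B]
      _ ≤ cfc (fun t : ℝ => t) B := by
          refine cfc_mono (fun t ht => ?_)
            (((hc3.mul continuous_id).mul continuous_id).continuousOn)
            (continuous_id.continuousOn)
          have ht0 := hσB t ht
          rw [abs_of_nonneg ht0]
          have h2 : t * t ≤ (t + ε) * t := by nlinarith
          calc (t + ε)⁻¹ * t * t = (t + ε)⁻¹ * (t * t) := by ring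
            _ ≤ (t + ε)⁻¹ * ((t + ε) * t) := by
                have : (0:ℝ) < t + ε := by linarith
                exact mul_le_mul_of_nonneg_left h2 (by positivity)
            _ = t := by
                field_simp
      _ = B := cfc_id' ℝ B
  -- inner product estimates
  have key : (inner ℂ (S x) x : ℂ) = inner ℂ (P x) (Q (Sd x)) := by
    have h1 : S x = (S * Q) (P x) := by
      conv_rhs => rw [← ContinuousLinearMap.mul_apply, mul_assoc, hQP, mul_one]
    have hadj : ContinuousLinearMap.adjoint (S * Q) = Q * Sd := by
      rw [← star_eq_adjoint, star_mul, star_eq_adjoint, star_eq_adjoint,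
        isSelfAdjoint_iff'.mp hQsa, hSd]
    rw [h1, ← adjoint_inner_right, hadj, ContinuousLinearMap.mul_apply]
  have hnorm : ‖(inner ℂ (S x) x : ℂ)‖ ≤ ‖P x‖ * ‖Q (Sd x)‖ := by
    rw [key]; exact norm_inner_le_norm _ _
  have hPx : ‖P x‖ ^ 2 = re (inner ℂ (A x) x : ℂ) + ε := by
    have h1 : (inner ℂ (P x) (P x) : ℂ) = inner ℂ ((P * P) x) x := by
      rw [ContinuousLinearMap.mul_apply, ← adjoint_inner_left, isSelfAdjoint_iff'.mp hPsa]
    have h2 : ‖P x‖ ^ 2 = re (inner ℂ (P x) (P x) : ℂ) := (inner_self_eq_norm_sq _).symm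
    rw [h2, h1, hPP, ContinuousLinearMap.add_apply, inner_add_left, map_add]
    congr 1
    have h3 : (algebraMap ℝ (H →L[ℂ] H) ε) x = (ε : ℂ) • x := by
      rw [Algebra.algebraMap_eq_smul_one]
      rw [ContinuousLinearMap.smul_apply, ContinuousLinearMap.one_apply]
      exact real_smul_eq_coe_smul ε x
    rw [h3, inner_smul_left]
    simp [inner_self_eq_norm_sq_to_K, hx]
  have hQx : ‖Q (Sd x)‖ ^ 2 ≤ re (inner ℂ (B x) x : ℂ) := by
    have h1 : (inner ℂ (Q (Sd x)) (Q (Sd x)) : ℂ) = inner ℂ ((S * (Q * Q) * Sd) x) x := by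
      have e1 : (inner ℂ (Q (Sd x)) (Q (Sd x)) : ℂ) = inner ℂ ((Q * Q) (Sd x)) (Sd x) := by
        rw [ContinuousLinearMap.mul_apply, ← adjoint_inner_left, isSelfAdjoint_iff'.mp hQsa]
      have e2 : (inner ℂ ((Q * Q) (Sd x)) (Sd x) : ℂ) = inner ℂ (S ((Q * Q) (Sd x))) x := by
        rw [hSd, ← adjoint_inner_right (A := S)]
      rw [e1, e2]
      rfl
    have h2 : ‖Q (Sd x)‖ ^ 2 = re (inner ℂ ((S * (Q * Q) * Sd) x) x : ℂ) := by
      rw [← h1, inner_self_eq_norm_sq]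
    rw [h2]
    have h3 := (ContinuousLinearMap.nonneg_iff_isPositive _).mp
      (sub_nonneg.mpr hM) |>.re_inner_nonneg_left x
    rw [ContinuousLinearMap.sub_apply, inner_sub_left, map_sub] at h3
    linarith
  calc ‖(inner ℂ (S x) x : ℂ)‖ ^ 2 ≤ (‖P x‖ * ‖Q (Sd x)‖) ^ 2 := by
        exact pow_le_pow_left₀ (norm_nonneg _) hnorm 2
    _ = ‖P x‖ ^ 2 * ‖Q (Sd x)‖ ^ 2 := mul_pow _ _ _
    _ ≤ (re (inner ℂ (A x) x : ℂ) + ε) * re (inner ℂ (B x) x : ℂ) := by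
        rw [hPx]
        have hge : (0:ℝ) ≤ re (inner ℂ (A x) x : ℂ) + ε := by
          have := (ContinuousLinearMap.nonneg_iff_isPositive _).mp hA0 |>.re_inner_nonneg_left x
          linarith
        exact mul_le_mul_of_nonneg_left hQx hge

lemma numRad_pointwise (S : H →L[ℂ] H) (x : H) (hx : ‖x‖ = 1) :
    ‖(inner ℂ (S x) x : ℂ)‖ ≤
      (1 / 2 : ℝ) *
        (‖S‖ + Real.sqrt (specRad (absOp S * absOp (ContinuousLinearMap.adjoint S)))) := by
  set A := absOp S with hA
  set B := absOp (ContinuousLinearMap.adjoint S) with hB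
  have hA0 : 0 ≤ A := absOp_nonneg S
  have hB0 : 0 ≤ B := absOp_nonneg _
  have hnA : ‖A‖ = ‖S‖ := norm_absOp S
  have hnB : ‖B‖ = ‖S‖ := by
    rw [hB, norm_absOp]
    exact LinearIsometryEquiv.norm_map _ S
  set r : ℝ := Real.sqrt (specRad (A * B)) with hr
  have hABnorm : ‖A + B‖ ≤ ‖S‖ + r := by
    have := kittaneh_sum A B hA0 hB0
    rwa [hnA, hnB, max_self, norm_sqrt_mul_sqrt A B hA0 hB0] at this
  set u := re (inner ℂ (A x) x : ℂ) with hu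
  set w := re (inner ℂ (B x) x : ℂ) with hw
  have hu0 : 0 ≤ u :=
    ((ContinuousLinearMap.nonneg_iff_isPositive _).mp hA0).re_inner_nonneg_left x
  have hw0 : 0 ≤ w :=
    ((ContinuousLinearMap.nonneg_iff_isPositive _).mp hB0).re_inner_nonneg_left x
  have hsq : ‖(inner ℂ (S x) x : ℂ)‖ ^ 2 ≤ u * w := by
    refine le_of_forall_pos_le_add fun ε hε => ?_
    have hδ : 0 < ε / (w + 1) := by positivity
    have hms := mixed_schwarz_eps S x hx hδ
    calc ‖(inner ℂ (S x) x : ℂ)‖ ^ 2 ≤ (u + ε / (w + 1)) * w := hms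
      _ = u * w + (ε / (w + 1)) * w := by ring
      _ ≤ u * w + ε := by
          have : (ε / (w + 1)) * w ≤ ε := by
            rw [div_mul_eq_mul_div, div_le_iff₀ (by positivity)]
            nlinarith
          linarith
  have hhalf : ‖(inner ℂ (S x) x : ℂ)‖ ≤ (1 / 2 : ℝ) * (u + w) := by
    have h2 : ‖(inner ℂ (S x) x : ℂ)‖ ^ 2 ≤ ((1 / 2 : ℝ) * (u + w)) ^ 2 :=
      hsq.trans (by nlinarith [sq_nonneg (u - w)])
    exact pow_le_pow_iff_left₀ (norm_nonneg _) (by positivity) two_ne_zero |>.mp h2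
  have hsum : u + w = re (inner ℂ ((A + B) x) x : ℂ) := by
    rw [hu, hw, ContinuousLinearMap.add_apply, inner_add_left, map_add]
  have hlast : re (inner ℂ ((A + B) x) x : ℂ) ≤ ‖A + B‖ := by
    have h1 : re (inner ℂ ((A + B) x) x : ℂ) ≤ ‖(inner ℂ ((A + B) x) x : ℂ)‖ :=
      (le_abs_self _).trans (abs_re_le_norm _)
    have h2 := norm_inner_le_norm (𝕜 := ℂ) ((A + B) x) x
    have h3 := le_opNorm (A + B) x
    rw [hx] at h2 h3
    calc re (inner ℂ ((A + B) x) x : ℂ) ≤ ‖(inner ℂ ((A + B) x) x : ℂ)‖ := h1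
      _ ≤ ‖(A + B) x‖ * 1 := h2
      _ ≤ ‖A + B‖ * 1 * 1 := by rw [mul_one]; simpa using h3
      _ = ‖A + B‖ := by ring
  calc ‖(inner ℂ (S x) x : ℂ)‖ ≤ (1 / 2 : ℝ) * (u + w) := hhalf
    _ = (1 / 2 : ℝ) * re (inner ℂ ((A + B) x) x : ℂ) := by rw [hsum]
    _ ≤ (1 / 2 : ℝ) * ‖A + B‖ := by linarith [hlast]
    _ ≤ (1 / 2 : ℝ) * (‖S‖ + r) := by linarith [hABnorm]

end Auxiliary

set_option synthInstance.maxHeartbeats 1000000 in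
theorem stmt_7 {H : Type*} [NormedAddCommGroup H] [InnerProductSpace ℂ H] [CompleteSpace H]
    (S : H →L[ℂ] H) :
    (max ‖absOp (ContinuousLinearMap.adjoint S) +
            CFC.sqrt (CFC.sqrt (absOp (ContinuousLinearMap.adjoint S)) * absOp S *
              CFC.sqrt (absOp (ContinuousLinearMap.adjoint S)))‖
        ‖absOp S + CFC.sqrt (CFC.sqrt (absOp S) * absOp (ContinuousLinearMap.adjoint S) *
            CFC.sqrt (absOp S))‖ ≤
      ‖S‖ + Real.sqrt (specRad (absOp S * absOp (ContinuousLinearMap.adjoint S)))) ∧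
    numRadius S ≤
      (1 / 2 : ℝ) *
        (‖S‖ + Real.sqrt (specRad (absOp S * absOp (ContinuousLinearMap.adjoint S)))) := by
  have hA0 : 0 ≤ absOp S := absOp_nonneg S
  have hB0 : 0 ≤ absOp (ContinuousLinearMap.adjoint S) := absOp_nonneg _
  have hnA : ‖absOp S‖ = ‖S‖ := norm_absOp S
  have hnB : ‖absOp (ContinuousLinearMap.adjoint S)‖ = ‖S‖ := by
    rw [norm_absOp]
    exact LinearIsometryEquiv.norm_map _ S
  constructor
  · refine max_le ?_ ?_
    · calc ‖absOp (ContinuousLinearMap.adjoint S) +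
            CFC.sqrt (CFC.sqrt (absOp (ContinuousLinearMap.adjoint S)) * absOp S *
              CFC.sqrt (absOp (ContinuousLinearMap.adjoint S)))‖
          ≤ ‖absOp (ContinuousLinearMap.adjoint S)‖ +
            ‖CFC.sqrt (CFC.sqrt (absOp (ContinuousLinearMap.adjoint S)) * absOp S *
              CFC.sqrt (absOp (ContinuousLinearMap.adjoint S)))‖ := norm_add_le _ _
        _ = ‖S‖ + Real.sqrt (specRad (absOp S * absOp (ContinuousLinearMap.adjoint S))) := by
            rw [hnB, norm_CFC_sqrt _ (conj_sqrt_nonneg _ _ hA0), norm_conj_sqrt _ _ hA0 hB0]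
    · calc ‖absOp S + CFC.sqrt (CFC.sqrt (absOp S) * absOp (ContinuousLinearMap.adjoint S) *
              CFC.sqrt (absOp S))‖
          ≤ ‖absOp S‖ + ‖CFC.sqrt (CFC.sqrt (absOp S) *
              absOp (ContinuousLinearMap.adjoint S) * CFC.sqrt (absOp S))‖ := norm_add_le _ _
        _ = ‖S‖ + Real.sqrt (specRad (absOp S * absOp (ContinuousLinearMap.adjoint S))) := by
            rw [hnA, norm_CFC_sqrt _ (conj_sqrt_nonneg _ _ hB0), norm_conj_sqrt _ _ hB0 hA0,
              specRad_mul_comm]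
  · rw [numRadius]
    refine Real.iSup_le (fun x => numRad_pointwise S x x.2) ?_
    have := Real.sqrt_nonneg (specRad (absOp S * absOp (ContinuousLinearMap.adjoint S)))
    have := norm_nonneg S
    nlinarith
end

section
/- Let A, B be normal bounded linear operators on a complex Hilbert space H (i.e., A*A = AA* and B*B = BB*). Then ‖A + B‖ ≤ max{ ‖ |A| + | |B|^{1/2}·|A|^{1/2} | ‖ , ‖ |B| + | |A|^{1/2}·|B|^{1/2} | ‖ }. -/
set_option maxHeartbeats 4000000
set_option synthInstance.maxHeartbeats 1000000
set_option linter.unusedSectionVars false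
set_option linter.unusedVariables false

section KittanehProof

open ContinuousLinearMap Polynomial RCLike
open scoped InnerProductSpace

variable {H : Type*} [NormedAddCommGroup H] [InnerProductSpace ℂ H] [CompleteSpace H]

lemma pow_intertwine (T : H →L[ℂ] H) (n : ℕ) :
    T * (star T * T) ^ n = (T * star T) ^ n * T := by
  induction n with
  | zero => simp
  | succ n ih =>
    rw [pow_succ, ← mul_assoc, ih, pow_succ]
    noncomm_ring

lemma poly_intertwine (T : H →L[ℂ] H) (q : ℝ[X]) :
    T * aeval (star T * T) q = aeval (T * star T) q * T := by
  induction q using Polynomial.induction_on with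
  | C r => simpa using (Algebra.commutes r T).symm
  | add q₁ q₂ h₁ h₂ => simp [map_add, mul_add, add_mul, h₁, h₂]
  | monomial n r h =>
    simp only [map_mul, map_pow, aeval_C, aeval_X]
    calc T * (algebraMap ℝ _ r * (star T * T) ^ (n+1))
        = algebraMap ℝ _ r * (T * (star T * T) ^ (n+1)) := by
          rw [← mul_assoc, ← Algebra.commutes r T, mul_assoc]
      _ = algebraMap ℝ _ r * ((T * star T) ^ (n+1) * T) := by rw [pow_intertwine]
      _ = algebraMap ℝ _ r * (T * star T) ^ (n+1) * T := by rw [mul_assoc]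

-- spectrum of a selfadjoint element is inside Icc (-r) r for r = ‖a‖ * ‖1‖
lemma spec_subset_Icc (a : H →L[ℂ] H) {r : ℝ} (hr : ‖a‖ * ‖(1 : H →L[ℂ] H)‖ ≤ r) :
    spectrum ℝ a ⊆ Set.Icc (-r) r := by
  intro t ht
  have := spectrum.subset_closedBall_norm_mul (𝕜 := ℝ) a ht
  simp only [Metric.mem_closedBall, Real.dist_eq, sub_zero] at this
  have : |t| ≤ r := le_trans this hr
  exact abs_le.mp this

lemma poly_approx {f : ℝ → ℝ} (hf : Continuous f) {r ε : ℝ} (hr : 0 ≤ r) (hε : 0 < ε) :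
    ∃ q : ℝ[X], ∀ t ∈ Set.Icc (-r) r, |f t - q.eval t| ≤ ε := by
  set s : Set ℝ := Set.Icc (-r) r
  have hdense := polynomialFunctions_closure_eq_top (-r) r
  set g : C(s, ℝ) := ContinuousMap.restrict s ⟨f, hf⟩ with hg
  have hmem : g ∈ (polynomialFunctions s).topologicalClosure := by
    rw [hdense]; trivial
  rw [← SetLike.mem_coe, Subalgebra.topologicalClosure_coe] at hmem
  rw [Metric.mem_closure_iff] at hmem
  obtain ⟨p, hp, hdist⟩ := hmem ε hε
  rw [polynomialFunctions_coe] at hp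
  obtain ⟨q, rfl⟩ := hp
  refine ⟨q, fun t ht => ?_⟩
  have := hdist
  rw [ContinuousMap.dist_lt_iff hε] at this
  have h2 := this ⟨t, ht⟩
  simp only [Real.dist_eq] at h2
  exact le_of_lt h2

lemma cfc_intertwine_s11 (T : H →L[ℂ] H) {f : ℝ → ℝ} (hf : Continuous f) :
    T * cfc f (star T * T) = cfc f (T * star T) * T := by
  set M := star T * T with hM
  set N := T * star T with hN
  have hMsa : IsSelfAdjoint M := IsSelfAdjoint.star_mul_self T
  have hNsa : IsSelfAdjoint N := IsSelfAdjoint.mul_star_self T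
  set r : ℝ := max (‖M‖ * ‖(1 : H →L[ℂ] H)‖) (‖N‖ * ‖(1 : H →L[ℂ] H)‖) with hr
  have hrM : spectrum ℝ M ⊆ Set.Icc (-r) r := spec_subset_Icc M (le_max_left _ _)
  have hrN : spectrum ℝ N ⊆ Set.Icc (-r) r := spec_subset_Icc N (le_max_right _ _)
  have key : ∀ ε > (0:ℝ), ‖T * cfc f M - cfc f N * T‖ ≤ 2 * ‖T‖ * ε := by
    intro ε hε
    obtain ⟨q, hq⟩ := poly_approx hf (le_trans (mul_nonneg (norm_nonneg M) (norm_nonneg (1 : H →L[ℂ] H))) (le_max_left _ _)) hε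
    have hqM : ‖cfc f M - aeval M q‖ ≤ ε := by
      rw [← cfc_polynomial q M hMsa, ← cfc_sub f _ M hf.continuousOn (Polynomial.continuous q).continuousOn]
      exact norm_cfc_le hε.le fun x hx => by
        simpa [Real.norm_eq_abs] using hq x (hrM hx)
    have hqN : ‖cfc f N - aeval N q‖ ≤ ε := by
      rw [← cfc_polynomial q N hNsa, ← cfc_sub f _ N hf.continuousOn (Polynomial.continuous q).continuousOn]
      exact norm_cfc_le hε.le fun x hx => by
        simpa [Real.norm_eq_abs] using hq x (hrN hx)
    have hpoly := poly_intertwine T q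
    calc ‖T * cfc f M - cfc f N * T‖
        = ‖T * (cfc f M - aeval M q) + (aeval N q - cfc f N) * T‖ := by
          rw [mul_sub, sub_mul, ← hpoly, ← hM]; abel
      _ ≤ ‖T * (cfc f M - aeval M q)‖ + ‖(aeval N q - cfc f N) * T‖ := norm_add_le _ _
      _ ≤ ‖T‖ * ε + ε * ‖T‖ := by
          have h1 : ‖T * (cfc f M - aeval M q)‖ ≤ ‖T‖ * ε :=
            le_trans (norm_mul_le T (cfc f M - aeval M q))
              (mul_le_mul_of_nonneg_left hqM (norm_nonneg T))
          have h3 : ‖aeval N q - cfc f N‖ ≤ ε := by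
            rw [norm_sub_rev]; exact hqN
          have h2 : ‖(aeval N q - cfc f N) * T‖ ≤ ε * ‖T‖ :=
            le_trans (norm_mul_le (aeval N q - cfc f N) T)
              (mul_le_mul_of_nonneg_right h3 (norm_nonneg T))
          linarith
      _ = 2 * ‖T‖ * ε := by ring
  have hle : ‖T * cfc f M - cfc f N * T‖ ≤ 0 := by
    by_contra h
    push_neg at h
    set c := ‖T * cfc f M - cfc f N * T‖ with hc
    have hk := key (c / (4 * (‖T‖ + 1))) (by positivity)
    have hTpos : (0:ℝ) < ‖T‖ + 1 := by positivity
    have hd : c / (4 * (‖T‖ + 1)) * (4 * (‖T‖ + 1)) = c := div_mul_cancel₀ c (by positivity)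
    have hd0 : (0:ℝ) ≤ c / (4 * (‖T‖ + 1)) := by positivity
    nlinarith [hd, hd0, norm_nonneg T, hk]
  have := le_antisymm hle (norm_nonneg _)
  rwa [norm_eq_zero, sub_eq_zero] at this

lemma mixed_schwarz_eps_s11 (T : H →L[ℂ] H) (x y : H) {ε : ℝ} (hε : 0 < ε) :
    ‖(⟪T x, y⟫_ℂ)‖ ^ 2 ≤
      (re ⟪(cfc Real.sqrt (star T * T)) x, x⟫_ℂ + ε * ‖x‖ ^ 2) *
        re ⟪(cfc Real.sqrt (T * star T)) y, y⟫_ℂ := by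
  set M := star T * T with hM
  set N := T * star T with hN
  have hMsa : IsSelfAdjoint M := IsSelfAdjoint.star_mul_self T
  have hNsa : IsSelfAdjoint N := IsSelfAdjoint.mul_star_self T
  have hM0 : (0:H →L[ℂ] H) ≤ M := star_mul_self_nonneg T
  have hN0 : (0:H →L[ℂ] H) ≤ N := mul_star_self_nonneg T
  have hgc : Continuous (fun t : ℝ => (Real.sqrt t + ε)⁻¹) := by
    refine (Real.continuous_sqrt.add continuous_const).inv₀ fun t => ?_
    exact (add_pos_of_nonneg_of_pos (Real.sqrt_nonneg t) hε).ne'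
  set P := cfc Real.sqrt M with hP
  set Q := cfc Real.sqrt N with hQ
  set Sε := cfc (fun t : ℝ => (Real.sqrt t + ε)⁻¹) M with hS
  set Rε := cfc (fun t : ℝ => Real.sqrt t + ε) M with hR
  have hRc : Continuous (fun t : ℝ => Real.sqrt t + ε) := Real.continuous_sqrt.add continuous_const
  have hSR : Sε * Rε = 1 := by
    rw [hS, hR, ← cfc_mul _ _ M hgc.continuousOn hRc.continuousOn,
      ← cfc_one (R := ℝ) M hMsa]
    exact cfc_congr fun t _ => by field_simp; rfl
  set K := cfc (fun t : ℝ => Real.sqrt (Real.sqrt t + ε)) M with hK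
  have hKc : Continuous (fun t : ℝ => Real.sqrt (Real.sqrt t + ε)) :=
    Real.continuous_sqrt.comp hRc
  have hKsa : IsSelfAdjoint K := cfc_predicate _ M
  have hSsa : IsSelfAdjoint Sε := cfc_predicate _ M
  have hKK : K * K = Rε := by
    rw [hK, hR, ← cfc_mul _ _ M hKc.continuousOn hKc.continuousOn]
    exact cfc_congr fun t _ => Real.mul_self_sqrt (by positivity)
  have hKadj : ∀ u v : H, ⟪K u, v⟫_ℂ = ⟪u, K v⟫_ℂ := fun u v => by
    conv_lhs => rw [← hKsa.adjoint_eq]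
    exact adjoint_inner_left K v u
  set W := T * Sε with hW
  set z := adjoint W y with hz
  -- ⟪T x, y⟫ = ⟪K x, K z⟫
  have key : ⟪T x, y⟫_ℂ = ⟪K x, K z⟫_ℂ := by
    have hT : T = W * Rε := by rw [hW, mul_assoc, hSR, mul_one]
    calc ⟪T x, y⟫_ℂ = ⟪W (Rε x), y⟫_ℂ := by rw [← mul_apply_eq_comp, ← hT]
      _ = ⟪Rε x, z⟫_ℂ := (adjoint_inner_right W (Rε x) y).symm
      _ = ⟪K (K x), z⟫_ℂ := by rw [← hKK, mul_apply_eq_comp]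
      _ = ⟪K x, K z⟫_ℂ := hKadj _ _
  -- ‖K x‖² = re⟪P x, x⟫ + ε ‖x‖²
  have hRP : Rε = P + ε • (1 : H →L[ℂ] H) := by
    rw [hR, hP, cfc_add M Real.sqrt (fun _ => ε) Real.continuous_sqrt.continuousOn
      continuousOn_const, cfc_const ε M hMsa, Algebra.algebraMap_eq_smul_one]
  have hKx : ‖K x‖ ^ 2 = re ⟪P x, x⟫_ℂ + ε * ‖x‖ ^ 2 := by
    rw [← inner_self_eq_norm_sq (𝕜 := ℂ) (K x)]
    rw [hKadj x (K x), ← mul_apply_eq_comp, hKK, hRP]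
    simp only [add_apply, smul_apply, one_apply_eq_self, inner_add_right]
    rw [map_add, inner_re_symm]
    congr 1
    rw [real_smul_eq_coe_smul (K := ℂ) ε x, inner_smul_right]
    simp [inner_self_eq_norm_sq (𝕜 := ℂ) x]
    left; norm_cast
  -- ‖K z‖² ≤ re⟪Q y, y⟫
  have hKz : ‖K z‖ ^ 2 ≤ re ⟪Q y, y⟫_ℂ := by
    have h1 : ‖K z‖ ^ 2 = re ⟪(W * Rε * adjoint W) y, y⟫_ℂ := by
      have e0 : (W * Rε * adjoint W) y = W (Rε z) := by
        rw [mul_apply_eq_comp, mul_apply_eq_comp, hz]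
      rw [e0, ← adjoint_inner_right W (Rε z) y, ← hz, ← hKK, mul_apply_eq_comp, hKadj (K z) z,
        ← inner_self_eq_norm_sq (𝕜 := ℂ) (K z), hKadj z (K z)]
    have hWadj : adjoint W = Sε * adjoint T := by
      rw [hW, ← star_eq_adjoint, ← star_eq_adjoint, star_mul, hSsa.star_eq]
    have h2 : W * Rε * adjoint W = cfc (fun t : ℝ => (Real.sqrt t + ε)⁻¹ * t) N := by
      have e1 : W * Rε * adjoint W = T * ((Sε * Rε) * Sε) * star T := by
        rw [hWadj, star_eq_adjoint, hW]
        noncomm_ring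
      rw [e1, hSR, one_mul]
      have e2 : T * Sε * star T = cfc (fun t : ℝ => (Real.sqrt t + ε)⁻¹) N * N := by
        rw [hS, hM, cfc_intertwine_s11 T hgc, hN, mul_assoc]
      have e3 : cfc (fun t : ℝ => (Real.sqrt t + ε)⁻¹ * t) N =
          cfc (fun t : ℝ => (Real.sqrt t + ε)⁻¹) N * cfc (fun t : ℝ => t) N :=
        cfc_mul _ _ N hgc.continuousOn continuous_id.continuousOn
      have e4 : cfc (fun t : ℝ => t) N = N := cfc_id' ℝ N hNsa
      rw [e2, e3, e4]
    have h3 : cfc (fun t : ℝ => (Real.sqrt t + ε)⁻¹ * t) N ≤ Q := by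
      rw [hQ]
      refine cfc_mono (fun t ht => ?_) ((hgc.mul continuous_id).continuousOn)
        Real.continuous_sqrt.continuousOn
      have ht0 : 0 ≤ t := spectrum_nonneg_of_nonneg hN0 ht
      have h4 : 0 < Real.sqrt t + ε := by positivity
      rw [inv_mul_eq_div, div_le_iff₀ h4]
      nlinarith [Real.sq_sqrt ht0, Real.sqrt_nonneg t]
    have h5 : re ⟪(W * Rε * adjoint W) y, y⟫_ℂ ≤ re ⟪Q y, y⟫_ℂ := by
      have h6 := ((le_def _ _).mp h3).re_inner_nonneg_left y
      rw [← h2] at h6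
      simp only [sub_apply, inner_sub_left, map_sub] at h6
      linarith
    linarith [h1 ▸ h5]
  -- combine
  have hQ0 : (0:ℝ) ≤ re ⟪Q y, y⟫_ℂ := le_trans (by positivity) hKz
  calc ‖(⟪T x, y⟫_ℂ)‖ ^ 2 = ‖(⟪K x, K z⟫_ℂ)‖ ^ 2 := by rw [key]
    _ ≤ (‖K x‖ * ‖K z‖) ^ 2 := by
        have := norm_inner_le_norm (𝕜 := ℂ) (K x) (K z)
        exact pow_le_pow_left₀ (norm_nonneg _) this 2
    _ = ‖K x‖ ^ 2 * ‖K z‖ ^ 2 := by ring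
    _ ≤ (re ⟪P x, x⟫_ℂ + ε * ‖x‖ ^ 2) * re ⟪Q y, y⟫_ℂ := by
        rw [hKx]
        exact mul_le_mul_of_nonneg_left hKz (by rw [← hKx]; positivity)

lemma inner_nonneg_of_nonneg {R : H →L[ℂ] H} (hR : 0 ≤ R) (u : H) :
    0 ≤ re ⟪R u, u⟫_ℂ :=
  ((nonneg_iff_isPositive R).mp hR).re_inner_nonneg_left u

lemma cfc_sqrt_nonneg (M : H →L[ℂ] H) : (0:H →L[ℂ] H) ≤ cfc Real.sqrt M :=
  cfc_nonneg fun t _ => Real.sqrt_nonneg t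

lemma mixed_schwarz (T : H →L[ℂ] H) (x y : H) :
    ‖(⟪T x, y⟫_ℂ)‖ ^ 2 ≤
      re ⟪(cfc Real.sqrt (star T * T)) x, x⟫_ℂ * re ⟪(cfc Real.sqrt (T * star T)) y, y⟫_ℂ := by
  set a := re ⟪(cfc Real.sqrt (star T * T)) x, x⟫_ℂ with ha
  set b := re ⟪(cfc Real.sqrt (T * star T)) y, y⟫_ℂ with hb
  have hb0 : 0 ≤ b := inner_nonneg_of_nonneg (cfc_sqrt_nonneg _) y
  refine le_of_forall_pos_le_add fun δ hδ => ?_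
  have hpos : (0:ℝ) < ‖x‖ ^ 2 * b + 1 := by positivity
  have h1 := mixed_schwarz_eps_s11 T x y (ε := δ / (‖x‖ ^ 2 * b + 1)) (by positivity)
  rw [← ha, ← hb] at h1
  have h2 : δ / (‖x‖ ^ 2 * b + 1) * ‖x‖ ^ 2 * b ≤ δ := by
    rw [div_mul_eq_mul_div, div_mul_eq_mul_div, div_le_iff₀ hpos]
    nlinarith [sq_nonneg (‖x‖), hδ.le]
  nlinarith [h1, h2]

lemma sqrt_eq_cfc {M : H →L[ℂ] H} (hM : 0 ≤ M) : CFC.sqrt M = cfc Real.sqrt M := by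
  have hMsa : IsSelfAdjoint M := IsSelfAdjoint.of_nonneg hM
  have hmul : cfc Real.sqrt M * cfc Real.sqrt M = M := by
    rw [← cfc_mul _ _ M Real.continuous_sqrt.continuousOn Real.continuous_sqrt.continuousOn]
    conv_rhs => rw [← cfc_id' ℝ M hMsa]
    exact cfc_congr fun t ht => Real.mul_self_sqrt (spectrum_nonneg_of_nonneg hM ht)
  exact CFC.sqrt_unique hmul (cfc_sqrt_nonneg M)

lemma opNorm_le_of_inner (S : H →L[ℂ] H) (c : ℝ) (hc : 0 ≤ c)
    (h : ∀ x y : H, ‖(⟪S x, y⟫_ℂ)‖ ≤ c * ‖x‖ * ‖y‖) : ‖S‖ ≤ c := by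
  refine opNorm_le_bound S hc fun x => ?_
  rcases eq_or_lt_of_le (norm_nonneg (S x)) with h0 | h0
  · rw [← h0]; positivity
  · have h1 := h x (S x)
    have h2 : ‖(⟪S x, S x⟫_ℂ)‖ = ‖S x‖ * ‖S x‖ := by
      rw [inner_self_eq_norm_sq_to_K (𝕜 := ℂ) (S x), norm_pow, RCLike.norm_ofReal,
        abs_of_nonneg (norm_nonneg _), sq]
    rw [h2] at h1
    have := le_of_mul_le_mul_right (by linarith [h1] : ‖S x‖ * ‖S x‖ ≤ c * ‖x‖ * ‖S x‖) h0
    linarith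

lemma sqrt_cs {a b c d : ℝ} (ha : 0 ≤ a) (hb : 0 ≤ b) (hc : 0 ≤ c) (hd : 0 ≤ d) :
    Real.sqrt (a * c) + Real.sqrt (b * d) ≤ Real.sqrt (a + b) * Real.sqrt (c + d) := by
  have e1 : Real.sqrt (a * c) = Real.sqrt a * Real.sqrt c := Real.sqrt_mul ha c
  have e2 : Real.sqrt (b * d) = Real.sqrt b * Real.sqrt d := Real.sqrt_mul hb d
  have sq1 := Real.sq_sqrt ha
  have sq2 := Real.sq_sqrt hb
  have sq3 := Real.sq_sqrt hc
  have sq4 := Real.sq_sqrt hd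
  have sq5 := Real.sq_sqrt (add_nonneg ha hb)
  have sq6 := Real.sq_sqrt (add_nonneg hc hd)
  have n1 := Real.sqrt_nonneg a
  have n2 := Real.sqrt_nonneg b
  have n3 := Real.sqrt_nonneg c
  have n4 := Real.sqrt_nonneg d
  have n5 := Real.sqrt_nonneg (a + b)
  have n6 := Real.sqrt_nonneg (c + d)
  have key : (Real.sqrt a * Real.sqrt c + Real.sqrt b * Real.sqrt d) ^ 2 ≤
      (Real.sqrt (a + b) * Real.sqrt (c + d)) ^ 2 := by
    have cross : 2 * (Real.sqrt a * Real.sqrt c * (Real.sqrt b * Real.sqrt d)) ≤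
        a * d + b * c := by
      nlinarith [sq_nonneg (Real.sqrt a * Real.sqrt d - Real.sqrt b * Real.sqrt c)]
    nlinarith [cross]
  rw [e1, e2]
  have h0 : 0 ≤ Real.sqrt a * Real.sqrt c + Real.sqrt b * Real.sqrt d := by positivity
  nlinarith [key, h0, mul_nonneg n5 n6]

lemma re_inner_le_norm_op (R : H →L[ℂ] H) (u : H) : re ⟪R u, u⟫_ℂ ≤ ‖R‖ * ‖u‖ ^ 2 := by
  calc re ⟪R u, u⟫_ℂ ≤ ‖(⟪R u, u⟫_ℂ)‖ := re_le_norm _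
    _ ≤ ‖R u‖ * ‖u‖ := norm_inner_le_norm _ _
    _ ≤ (‖R‖ * ‖u‖) * ‖u‖ := by
        have := le_opNorm R u
        gcongr
    _ = ‖R‖ * ‖u‖ ^ 2 := by ring

lemma selfadj_inner_move {R : H →L[ℂ] H} (hR : IsSelfAdjoint R) (u v : H) :
    ⟪R u, v⟫_ℂ = ⟪u, R v⟫_ℂ := by
  conv_lhs => rw [← hR.adjoint_eq]
  exact adjoint_inner_left R v u


end KittanehProof

open ContinuousLinearMap Polynomial RCLike
open scoped InnerProductSpace

set_option synthInstance.maxHeartbeats 1000000 in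
theorem stmt_11 {H : Type*} [NormedAddCommGroup H] [InnerProductSpace ℂ H] [CompleteSpace H]
    (A B : H →L[ℂ] H)
    (hA : ContinuousLinearMap.adjoint A * A = A * ContinuousLinearMap.adjoint A)
    (hB : ContinuousLinearMap.adjoint B * B = B * ContinuousLinearMap.adjoint B) :
    ‖A + B‖ ≤
      max ‖absOp A + absOp (CFC.sqrt (absOp B) * CFC.sqrt (absOp A))‖
        ‖absOp B + absOp (CFC.sqrt (absOp A) * CFC.sqrt (absOp B))‖ := by
  have hA' : star A * A = A * star A := by rw [star_eq_adjoint]; exact hA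
  have hB' : star B * B = B * star B := by rw [star_eq_adjoint]; exact hB
  set P := cfc Real.sqrt (star A * A) with hPdef
  set Q := cfc Real.sqrt (star B * B) with hQdef
  have hPP : absOp A = P := by
    rw [absOp, ← star_eq_adjoint]; exact sqrt_eq_cfc (star_mul_self_nonneg A)
  have hQQ : absOp B = Q := by
    rw [absOp, ← star_eq_adjoint]; exact sqrt_eq_cfc (star_mul_self_nonneg B)
  have hP0 : (0:H →L[ℂ] H) ≤ P := cfc_sqrt_nonneg _
  have hQ0 : (0:H →L[ℂ] H) ≤ Q := cfc_sqrt_nonneg _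
  rw [hPP, hQQ]
  set p := CFC.sqrt P with hpdef
  set q := CFC.sqrt Q with hqdef
  have hp0 : (0:H →L[ℂ] H) ≤ p := CFC.sqrt_nonneg P
  have hq0 : (0:H →L[ℂ] H) ≤ q := CFC.sqrt_nonneg Q
  have hpsa : IsSelfAdjoint p := IsSelfAdjoint.of_nonneg hp0
  have hqsa : IsSelfAdjoint q := IsSelfAdjoint.of_nonneg hq0
  have hpp : p * p = P := CFC.sqrt_mul_sqrt_self P hP0
  have hqq : q * q = Q := CFC.sqrt_mul_sqrt_self Q hQ0
  set C : H →L[ℂ] H := q * p with hCdef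
  have hstarC : star C = p * q := by rw [hCdef, star_mul, hpsa.star_eq, hqsa.star_eq]
  set C₁ := cfc Real.sqrt (star C * C) with hC1def
  set C₂ := cfc Real.sqrt (C * star C) with hC2def
  have hC1 : absOp C = C₁ := by
    rw [absOp, ← star_eq_adjoint]; exact sqrt_eq_cfc (star_mul_self_nonneg C)
  have hC2 : absOp (p * q) = C₂ := by
    rw [absOp, ← star_eq_adjoint, ← hstarC, star_star]
    exact sqrt_eq_cfc (mul_star_self_nonneg C)
  rw [hC1, hC2]
  set m := max ‖P + C₁‖ ‖Q + C₂‖ with hmdef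
  have hm0 : (0:ℝ) ≤ m := le_trans (norm_nonneg _) (le_max_left _ _)
  -- Step I : ‖A + B‖ ≤ ‖P + Q‖
  have stepI : ‖A + B‖ ≤ ‖P + Q‖ := by
    refine opNorm_le_of_inner _ _ (norm_nonneg _) fun x y => ?_
    have hAms := mixed_schwarz A x y
    rw [← hA', ← hPdef] at hAms
    have hBms := mixed_schwarz B x y
    rw [← hB', ← hQdef] at hBms
    have h1 : ‖(⟪A x, y⟫_ℂ)‖ ≤ Real.sqrt (re ⟪P x, x⟫_ℂ * re ⟪P y, y⟫_ℂ) :=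
      (Real.le_sqrt (norm_nonneg _) (le_trans (by positivity) hAms)).mpr hAms
    have h2 : ‖(⟪B x, y⟫_ℂ)‖ ≤ Real.sqrt (re ⟪Q x, x⟫_ℂ * re ⟪Q y, y⟫_ℂ) :=
      (Real.le_sqrt (norm_nonneg _) (le_trans (by positivity) hBms)).mpr hBms
    have hcs := sqrt_cs (inner_nonneg_of_nonneg hP0 x) (inner_nonneg_of_nonneg hQ0 x)
      (inner_nonneg_of_nonneg hP0 y) (inner_nonneg_of_nonneg hQ0 y)
    have hsum : ∀ u : H, re ⟪P u, u⟫_ℂ + re ⟪Q u, u⟫_ℂ = re ⟪(P + Q) u, u⟫_ℂ := by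
      intro u
      rw [add_apply, inner_add_left, map_add]
    have hb1 : Real.sqrt (re ⟪(P + Q) x, x⟫_ℂ) ≤ Real.sqrt ‖P + Q‖ * ‖x‖ := by
      have := Real.sqrt_le_sqrt (re_inner_le_norm_op (P + Q) x)
      rwa [Real.sqrt_mul (norm_nonneg _), Real.sqrt_sq (norm_nonneg x)] at this
    have hb2 : Real.sqrt (re ⟪(P + Q) y, y⟫_ℂ) ≤ Real.sqrt ‖P + Q‖ * ‖y‖ := by
      have := Real.sqrt_le_sqrt (re_inner_le_norm_op (P + Q) y)
      rwa [Real.sqrt_mul (norm_nonneg _), Real.sqrt_sq (norm_nonneg y)] at this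
    calc ‖(⟪(A + B) x, y⟫_ℂ)‖ = ‖(⟪A x, y⟫_ℂ) + (⟪B x, y⟫_ℂ)‖ := by
          rw [add_apply, inner_add_left]
      _ ≤ ‖(⟪A x, y⟫_ℂ)‖ + ‖(⟪B x, y⟫_ℂ)‖ := norm_add_le _ _
      _ ≤ Real.sqrt (re ⟪P x, x⟫_ℂ * re ⟪P y, y⟫_ℂ) +
            Real.sqrt (re ⟪Q x, x⟫_ℂ * re ⟪Q y, y⟫_ℂ) := add_le_add h1 h2
      _ ≤ Real.sqrt (re ⟪P x, x⟫_ℂ + re ⟪Q x, x⟫_ℂ) *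
            Real.sqrt (re ⟪P y, y⟫_ℂ + re ⟪Q y, y⟫_ℂ) := hcs
      _ = Real.sqrt (re ⟪(P + Q) x, x⟫_ℂ) * Real.sqrt (re ⟪(P + Q) y, y⟫_ℂ) := by
          rw [hsum x, hsum y]
      _ ≤ (Real.sqrt ‖P + Q‖ * ‖x‖) * (Real.sqrt ‖P + Q‖ * ‖y‖) := by
          exact mul_le_mul hb1 hb2 (Real.sqrt_nonneg _) (by positivity)
      _ = ‖P + Q‖ * ‖x‖ * ‖y‖ := by
          rw [show (Real.sqrt ‖P + Q‖ * ‖x‖) * (Real.sqrt ‖P + Q‖ * ‖y‖)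
              = (Real.sqrt ‖P + Q‖ * Real.sqrt ‖P + Q‖) * ‖x‖ * ‖y‖ by ring,
            Real.mul_self_sqrt (norm_nonneg _)]
  -- Step III : ‖P + Q‖ ≤ m
  have stepIII : ‖P + Q‖ ≤ m := by
    refine opNorm_le_bound _ hm0 fun x => ?_
    set u := p x with hu
    set v := q x with hv
    set w := (P + Q) x with hw
    have hpu : P x = p u := by rw [← hpp, mul_apply_eq_comp]
    have hqv : Q x = q v := by rw [← hqq, mul_apply_eq_comp]
    have e1 : re ⟪P x, P x⟫_ℂ = re ⟪P u, u⟫_ℂ := by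
      rw [hpu, selfadj_inner_move hpsa u (p u), ← mul_apply_eq_comp, hpp, inner_re_symm]
    have e4 : re ⟪Q x, Q x⟫_ℂ = re ⟪Q v, v⟫_ℂ := by
      rw [hqv, selfadj_inner_move hqsa v (q v), ← mul_apply_eq_comp, hqq, inner_re_symm]
    have e2 : ⟪P x, Q x⟫_ℂ = ⟪C u, v⟫_ℂ := by
      rw [hpu, hqv, ← selfadj_inner_move hqsa (p u) v, ← mul_apply_eq_comp, ← hCdef]
    have e3 : re ⟪Q x, P x⟫_ℂ = re ⟪P x, Q x⟫_ℂ := inner_re_symm _ _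
    have hα : (0:ℝ) ≤ re ⟪C₁ u, u⟫_ℂ := inner_nonneg_of_nonneg (cfc_sqrt_nonneg _) u
    have hβ : (0:ℝ) ≤ re ⟪C₂ v, v⟫_ℂ := inner_nonneg_of_nonneg (cfc_sqrt_nonneg _) v
    have cross : 2 * re ⟪C u, v⟫_ℂ ≤ re ⟪C₁ u, u⟫_ℂ + re ⟪C₂ v, v⟫_ℂ := by
      have hms := mixed_schwarz C u v
      rw [← hC1def, ← hC2def] at hms
      have hre := re_le_norm (⟪C u, v⟫_ℂ)
      have hn := norm_nonneg (⟪C u, v⟫_ℂ)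
      nlinarith [hms, hre, hn, hα, hβ, sq_nonneg (re ⟪C₁ u, u⟫_ℂ - re ⟪C₂ v, v⟫_ℂ)]
    have expand : ‖w‖ ^ 2 = re ⟪P x, P x⟫_ℂ + re ⟪P x, Q x⟫_ℂ + re ⟪Q x, P x⟫_ℂ
        + re ⟪Q x, Q x⟫_ℂ := by
      rw [← inner_self_eq_norm_sq (𝕜 := ℂ) w, hw, add_apply, inner_add_left,
        inner_add_right, inner_add_right, map_add, map_add, map_add]
      ring
    have hsum1 : re ⟪P u, u⟫_ℂ + re ⟪C₁ u, u⟫_ℂ = re ⟪(P + C₁) u, u⟫_ℂ := by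
      rw [add_apply, inner_add_left, map_add]
    have hsum2 : re ⟪Q v, v⟫_ℂ + re ⟪C₂ v, v⟫_ℂ = re ⟪(Q + C₂) v, v⟫_ℂ := by
      rw [add_apply, inner_add_left, map_add]
    have husq : ‖u‖ ^ 2 = re ⟪P x, x⟫_ℂ := by
      rw [← inner_self_eq_norm_sq (𝕜 := ℂ) u, hu, selfadj_inner_move hpsa x (p x),
        ← mul_apply_eq_comp, hpp, inner_re_symm]
    have hvsq : ‖v‖ ^ 2 = re ⟪Q x, x⟫_ℂ := by
      rw [← inner_self_eq_norm_sq (𝕜 := ℂ) v, hv, selfadj_inner_move hqsa x (q x),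
        ← mul_apply_eq_comp, hqq, inner_re_symm]
    have h7 : re ⟪P x, x⟫_ℂ + re ⟪Q x, x⟫_ℂ = re ⟪w, x⟫_ℂ := by
      rw [hw, add_apply, inner_add_left, map_add]
    have h8 : re ⟪w, x⟫_ℂ ≤ ‖w‖ * ‖x‖ :=
      le_trans (re_le_norm _) (norm_inner_le_norm _ _)
    have hm1 : ‖P + C₁‖ ≤ m := le_max_left _ _
    have hm2 : ‖Q + C₂‖ ≤ m := le_max_right _ _
    have main : ‖w‖ ^ 2 ≤ m * (‖w‖ * ‖x‖) := by
      have b1 : re ⟪(P + C₁) u, u⟫_ℂ ≤ m * ‖u‖ ^ 2 :=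
        le_trans (re_inner_le_norm_op _ u) (by nlinarith [sq_nonneg ‖u‖])
      have b2 : re ⟪(Q + C₂) v, v⟫_ℂ ≤ m * ‖v‖ ^ 2 :=
        le_trans (re_inner_le_norm_op _ v) (by nlinarith [sq_nonneg ‖v‖])
      calc ‖w‖ ^ 2 = re ⟪P x, P x⟫_ℂ + re ⟪P x, Q x⟫_ℂ + re ⟪Q x, P x⟫_ℂ
            + re ⟪Q x, Q x⟫_ℂ := expand
        _ = re ⟪P u, u⟫_ℂ + 2 * re ⟪C u, v⟫_ℂ + re ⟪Q v, v⟫_ℂ := by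
            rw [e1, e3, e2, e4]; ring
        _ ≤ re ⟪P u, u⟫_ℂ + (re ⟪C₁ u, u⟫_ℂ + re ⟪C₂ v, v⟫_ℂ) + re ⟪Q v, v⟫_ℂ := by
            linarith [cross]
        _ = re ⟪(P + C₁) u, u⟫_ℂ + re ⟪(Q + C₂) v, v⟫_ℂ := by
            rw [← hsum1, ← hsum2]; ring
        _ ≤ m * ‖u‖ ^ 2 + m * ‖v‖ ^ 2 := add_le_add b1 b2
        _ = m * (re ⟪P x, x⟫_ℂ + re ⟪Q x, x⟫_ℂ) := by rw [husq, hvsq]; ring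
        _ = m * re ⟪w, x⟫_ℂ := by rw [h7]
        _ ≤ m * (‖w‖ * ‖x‖) := mul_le_mul_of_nonneg_left h8 hm0
    rcases eq_or_lt_of_le (norm_nonneg w) with h0 | h0
    · rw [← h0]; positivity
    · have : ‖w‖ * ‖w‖ ≤ (m * ‖x‖) * ‖w‖ := by nlinarith [main]
      exact le_of_mul_le_mul_right this h0
  exact le_trans stepI stepIII
end

section
/- Let A be a normal bounded linear operator on a complex Hilbert space H (i.e., A*A = AA*). Then ‖A‖ ≤ (1/2)·max{ ‖ |A| + | |A*|^{1/2}·|A|^{1/2} | ‖ , ‖ |A*| + | |A|^{1/2}·|A*|^{1/2} | ‖ }. -/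
set_option maxHeartbeats 2000000 in
set_option synthInstance.maxHeartbeats 1000000 in
theorem stmt_12 {H : Type*} [NormedAddCommGroup H] [InnerProductSpace ℂ H] [CompleteSpace H]
    (A : H →L[ℂ] H)
    (hA : ContinuousLinearMap.adjoint A * A = A * ContinuousLinearMap.adjoint A) :
    ‖A‖ ≤
      (1 / 2 : ℝ) *
        max ‖absOp A + absOp (CFC.sqrt (absOp (ContinuousLinearMap.adjoint A)) *
              CFC.sqrt (absOp A))‖
          ‖absOp (ContinuousLinearMap.adjoint A) + absOp (CFC.sqrt (absOp A) *
              CFC.sqrt (absOp (ContinuousLinearMap.adjoint A)))‖ := by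

  have h0 : (0 : H →L[ℂ] H) ≤ absOp A := CFC.sqrt_nonneg _
  have h1 : ContinuousLinearMap.adjoint (absOp A) = absOp A := by
    rw [← ContinuousLinearMap.star_eq_adjoint]
    exact h0.isSelfAdjoint
  have h2 : CFC.sqrt (absOp A) * CFC.sqrt (absOp A) = absOp A :=
    CFC.sqrt_mul_sqrt_self _ h0
  have h3 : absOp (absOp A) = absOp A := by
    rw [absOp, h1, CFC.sqrt_mul_self _ h0]
  have h5 : absOp A * absOp A = ContinuousLinearMap.adjoint A * A :=
    CFC.sqrt_mul_sqrt_self _ (star_mul_self_nonneg A)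
  have h4 : ‖absOp A‖ = ‖A‖ := by
    have e1 : ‖absOp A‖ * ‖absOp A‖ = ‖A‖ * ‖A‖ := by
      rw [← CStarRing.norm_star_mul_self (x := absOp A),
        ← CStarRing.norm_star_mul_self (x := A), ContinuousLinearMap.star_eq_adjoint, h1,
        h5, ContinuousLinearMap.star_eq_adjoint]
    nlinarith [norm_nonneg (absOp A), norm_nonneg A]
  have habsadj : absOp (ContinuousLinearMap.adjoint A) = absOp A := by
    rw [absOp, ContinuousLinearMap.adjoint_adjoint, ← hA]; rfl
  have hnorm : ‖absOp A + absOp A‖ = 2 * ‖A‖ := by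
    rw [← two_smul ℝ (absOp A), norm_smul, h4, Real.norm_ofNat]
  rw [habsadj, h2, h3, hnorm, max_self]
  linarith
end

section
/- Let S, T be bounded linear operators on a complex Hilbert space H such that each of S and T is either accretive or dissipative. Then ω(ST) ≤ 3·ω(S)·ω(T). -/
section Aux

open ContinuousLinearMap Complex

variable {H : Type*} [NormedAddCommGroup H] [InnerProductSpace ℂ H] [CompleteSpace H]

local notation "⟪" x ", " y "⟫" => @inner ℂ _ _ x y

lemma numRadius_nonneg (S : H →L[ℂ] H) : 0 ≤ numRadius S :=
  Real.iSup_nonneg fun _ => norm_nonneg _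

lemma numRadius_bdd (S : H →L[ℂ] H) :
    BddAbove (Set.range fun x : {x : H // ‖x‖ = 1} => ‖⟪S x, (x : H)⟫‖) := by
  refine ⟨‖S‖, ?_⟩
  rintro r ⟨⟨y, hy⟩, rfl⟩
  calc ‖⟪S y, y⟫‖ ≤ ‖S y‖ * ‖y‖ := norm_inner_le_norm _ _
    _ ≤ (‖S‖ * ‖y‖) * ‖y‖ := by
        have := S.le_opNorm y
        nlinarith [norm_nonneg y]
    _ = ‖S‖ := by rw [hy]; ring

lemma inner_le_numRadius (S : H →L[ℂ] H) {x : H} (hx : ‖x‖ = 1) :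
    ‖⟪S x, x⟫‖ ≤ numRadius S :=
  le_ciSup (numRadius_bdd S) (⟨x, hx⟩ : {x : H // ‖x‖ = 1})

lemma numRadius_le_norm (S : H →L[ℂ] H) : numRadius S ≤ ‖S‖ := by
  refine Real.iSup_le (fun x => ?_) (norm_nonneg S)
  calc ‖⟪S x, (x : H)⟫‖ ≤ ‖S (x : H)‖ * ‖(x : H)‖ := norm_inner_le_norm _ _
    _ ≤ (‖S‖ * ‖(x : H)‖) * ‖(x : H)‖ := by
        have := S.le_opNorm (x : H)
        nlinarith [norm_nonneg (x : H)]
    _ = ‖S‖ := by rw [x.2]; ring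

lemma inner_le_numRadius' (S : H →L[ℂ] H) (x : H) :
    ‖⟪S x, x⟫‖ ≤ numRadius S * ‖x‖ ^ 2 := by
  rcases eq_or_ne x 0 with rfl | hx
  · simp
  · have hn : (0 : ℝ) < ‖x‖ := norm_pos_iff.2 hx
    set u : H := ((‖x‖ : ℂ))⁻¹ • x with hu_def
    have hu : ‖u‖ = 1 := by
      rw [hu_def, norm_smul]
      simp [hn.ne']
    have h1 := inner_le_numRadius S hu
    have hSu : ⟪S u, u⟫ = ((‖x‖ : ℂ))⁻¹ * (starRingEnd ℂ ((‖x‖ : ℂ))⁻¹) * ⟪S x, x⟫ := by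
      rw [hu_def, map_smul, inner_smul_left, inner_smul_right]; ring
    have hcn : ‖(starRingEnd ℂ) (((‖x‖ : ℂ))⁻¹)‖ = ‖x‖⁻¹ := by
      simp [_root_.abs_of_nonneg hn.le]
    have hnn : ‖((‖x‖ : ℂ))⁻¹‖ = ‖x‖⁻¹ := by
      simp [_root_.abs_of_nonneg hn.le]
    have hns : ‖⟪S u, u⟫‖ = (‖x‖ ^ 2)⁻¹ * ‖⟪S x, x⟫‖ := by
      rw [hSu, norm_mul, norm_mul, hcn, hnn, sq, mul_inv]
    rw [hns] at h1
    have := mul_le_mul_of_nonneg_right h1 (le_of_lt (pow_pos hn 2))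
    calc ‖⟪S x, x⟫‖ = (‖x‖ ^ 2)⁻¹ * ‖⟪S x, x⟫‖ * ‖x‖ ^ 2 := by
          field_simp
      _ ≤ 1 * (numRadius S * ‖x‖ ^ 2) := by rw [one_mul]; nlinarith [pow_pos hn 2]
      _ = numRadius S * ‖x‖ ^ 2 := one_mul _

/-- Cauchy–Schwarz for a positive operator: `‖Ax‖² ≤ ‖A‖ ⟨Ax,x⟩`. -/
lemma pos_norm_sq_le {A : H →L[ℂ] H} (hA : A.IsPositive) (x : H) :
    ‖A x‖ ^ 2 ≤ ‖A‖ * Complex.re ⟪A x, x⟫ := by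
  have hsym : ∀ u v : H, ⟪A u, v⟫ = ⟪u, A v⟫ := by
    intro u v
    conv_lhs => rw [← hA.isSelfAdjoint.adjoint_eq]
    exact adjoint_inner_left A v u
  set a : ℝ := Complex.re ⟪A x, x⟫ with ha_def
  set n : ℝ := ‖A x‖ ^ 2 with hn_def
  set c : ℝ := Complex.re ⟪A (A x), A x⟫ with hc_def
  have hn0 : 0 ≤ n := by rw [hn_def]; positivity
  have ha0 : 0 ≤ a := by
    have := hA.2 x
    rwa [ContinuousLinearMap.reApplyInnerSelf_apply] at this
  have hc0 : 0 ≤ c := by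
    have := hA.2 (A x)
    rwa [ContinuousLinearMap.reApplyInnerSelf_apply] at this
  have hc_le : c ≤ ‖A‖ * n := by
    calc c ≤ ‖⟪A (A x), A x⟫‖ := Complex.re_le_norm _
      _ ≤ ‖A (A x)‖ * ‖A x‖ := norm_inner_le_norm _ _
      _ ≤ (‖A‖ * ‖A x‖) * ‖A x‖ := by
          have := A.le_opNorm (A x)
          nlinarith [norm_nonneg (A x)]
      _ = ‖A‖ * n := by rw [hn_def]; ring
  have hquad : ∀ t : ℝ, 0 ≤ c * (t * t) + (2 * n) * t + a := by
    intro t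
    have h0 := hA.2 (x + (t : ℂ) • A x)
    rw [ContinuousLinearMap.reApplyInnerSelf_apply] at h0
    have hexp : ⟪A (x + (t : ℂ) • A x), x + (t : ℂ) • A x⟫
        = ⟪A x, x⟫ + (t : ℂ) * ⟪A x, A x⟫ + (t : ℂ) * ⟪A (A x), x⟫
          + (t : ℂ) * (t : ℂ) * ⟪A (A x), A x⟫ := by
      rw [map_add, map_smul]
      rw [inner_add_left, inner_add_right, inner_add_right,
        inner_smul_left, inner_smul_right, inner_smul_left, inner_smul_right]
      simp [Complex.conj_ofReal]
      ring
    have hmid : ⟪A (A x), x⟫ = ⟪A x, A x⟫ := hsym (A x) x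
    have hAxAx : Complex.re ⟪A x, A x⟫ = n := by
      rw [hn_def]
      simpa [RCLike.re_to_complex] using inner_self_eq_norm_sq (𝕜 := ℂ) (A x)
    rw [hexp, hmid] at h0
    have hAxAx' : (((‖A x‖ : ℂ)) ^ 2).re = n := by rw [← Complex.ofReal_pow, Complex.ofReal_re]
    have h0' : 0 ≤ a + t * n + t * n + t * (t * c) := by
      simpa [RCLike.re_to_complex, Complex.add_re, Complex.re_ofReal_mul, mul_assoc, hAxAx, hAxAx',
        ha_def, hc_def] using h0
    nlinarith [h0']
  have hdisc := discrim_le_zero hquad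
  rw [discrim] at hdisc
  -- (2n)^2 - 4 c a ≤ 0, so n^2 ≤ c * a ≤ ‖A‖ n a
  have hn2 : n ^ 2 ≤ c * a := by nlinarith
  rcases eq_or_lt_of_le hn0 with h | h
  · rw [← h]
    exact mul_nonneg (norm_nonneg A) ha0
  · nlinarith [hn2, mul_le_mul_of_nonneg_right hc_le ha0, h]

/-- If a self-adjoint operator has numerical radius ≤ M then its norm is ≤ M. -/
lemma selfAdjoint_norm_le {A : H →L[ℂ] H} (hA : IsSelfAdjoint A) {M : ℝ} (hM : 0 ≤ M)
    (h : ∀ x : H, ‖⟪A x, x⟫‖ ≤ M * ‖x‖ ^ 2) : ‖A‖ ≤ M := by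
  have key : ∀ u v : H, Complex.re ⟪A u, v⟫ ≤ (M / 2) * (‖u‖ ^ 2 + ‖v‖ ^ 2) := by
    intro u v
    have hsym : Complex.re ⟪A v, u⟫ = Complex.re ⟪A u, v⟫ := by
      have h1 : ⟪A v, u⟫ = ⟪v, A u⟫ := by
        conv_lhs => rw [← hA.adjoint_eq]
        exact adjoint_inner_left A u v
      rw [h1, ← inner_conj_symm (A u) v, Complex.conj_re]
    have e1 : ⟪A (u + v), u + v⟫ = ⟪A u, u⟫ + ⟪A u, v⟫ + ⟪A v, u⟫ + ⟪A v, v⟫ := by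
      rw [map_add, inner_add_left, inner_add_right, inner_add_right]; ring
    have e2 : ⟪A (u - v), u - v⟫ = ⟪A u, u⟫ - ⟪A u, v⟫ - ⟪A v, u⟫ + ⟪A v, v⟫ := by
      rw [map_sub, inner_sub_left, inner_sub_right, inner_sub_right]; ring
    have b1 : Complex.re ⟪A (u + v), u + v⟫ ≤ M * ‖u + v‖ ^ 2 :=
      (Complex.re_le_norm _).trans (h (u + v))
    have b2 : -(M * ‖u - v‖ ^ 2) ≤ Complex.re ⟪A (u - v), u - v⟫ := by
      have h1 : |Complex.re ⟪A (u - v), u - v⟫| ≤ ‖⟪A (u - v), u - v⟫‖ := by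
        simpa using Complex.abs_re_le_norm ⟪A (u - v), u - v⟫
      have h2 := h (u - v)
      have h3 := neg_abs_le (Complex.re ⟪A (u - v), u - v⟫)
      linarith
    have par := parallelogram_law_with_norm ℂ u v
    have e1' : Complex.re ⟪A (u + v), u + v⟫
        = Complex.re ⟪A u, u⟫ + 2 * Complex.re ⟪A u, v⟫ + Complex.re ⟪A v, v⟫ := by
      rw [e1]; simp [Complex.add_re]; linarith [hsym]
    have e2' : Complex.re ⟪A (u - v), u - v⟫
        = Complex.re ⟪A u, u⟫ - 2 * Complex.re ⟪A u, v⟫ + Complex.re ⟪A v, v⟫ := by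
      rw [e2]; simp [Complex.add_re, Complex.sub_re]; linarith [hsym]
    nlinarith [b1, b2, par, e1', e2', pow_two (‖u + v‖), pow_two (‖u - v‖),
      pow_two (‖u‖), pow_two (‖v‖)]
  refine opNorm_le_bound A hM fun x => ?_
  rcases eq_or_ne (A x) 0 with hAx | hAx
  · rw [hAx, norm_zero]; positivity
  · have hAxn : (0 : ℝ) < ‖A x‖ := norm_pos_iff.2 hAx
    have hxn : (0 : ℝ) < ‖x‖ := by
      rcases eq_or_ne x 0 with rfl | hx0
      · simp at hAx
      · exact norm_pos_iff.2 hx0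
    set y : H := ((‖x‖ / ‖A x‖ : ℝ) : ℂ) • A x with hy_def
    have hyn : ‖y‖ = ‖x‖ := by
      rw [hy_def, norm_smul, Complex.norm_real, Real.norm_eq_abs,
        _root_.abs_of_nonneg (by positivity : (0:ℝ) ≤ ‖x‖ / ‖A x‖)]
      field_simp
    have hre : Complex.re ⟪A x, y⟫ = ‖x‖ * ‖A x‖ := by
      rw [hy_def, inner_smul_right]
      have h5 : ⟪A x, A x⟫ = ((‖A x‖ : ℂ)) ^ 2 := inner_self_eq_norm_sq_to_K (A x)
      rw [h5, ← Complex.ofReal_pow, Complex.re_ofReal_mul, Complex.ofReal_re]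
      field_simp
      try ring
    have hk := key x y
    rw [hre, hyn] at hk
    have : ‖x‖ * ‖A x‖ ≤ M * ‖x‖ ^ 2 := by nlinarith
    have : ‖A x‖ * ‖x‖ ≤ (M * ‖x‖) * ‖x‖ := by nlinarith
    exact le_of_mul_le_mul_right this hxn


lemma reOp_inner (S : H →L[ℂ] H) (x : H) :
    ⟪reOp S x, x⟫ = ((Complex.re ⟪S x, x⟫ : ℝ) : ℂ) := by
  have e : reOp S x = (2⁻¹ : ℂ) • (S x + ContinuousLinearMap.adjoint S x) := by
    simp [reOp]
  rw [e, inner_smul_left, inner_add_left, adjoint_inner_left, ← inner_conj_symm (S x) x]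
  have hc : (starRingEnd ℂ) (2⁻¹ : ℂ) = 2⁻¹ := by
    simp [Complex.ext_iff]
  rw [hc, add_comm, Complex.add_conj, Complex.conj_re]
  push_cast
  ring

lemma isSelfAdjoint_reOp (S : H →L[ℂ] H) : IsSelfAdjoint (reOp S) := by
  have h : reOp S = (2⁻¹ : ℂ) • (S + star S) := by
    rw [reOp, ContinuousLinearMap.star_eq_adjoint]
  rw [h, IsSelfAdjoint, star_smul, star_add, star_star]
  simp [add_comm]

lemma reOp_norm_le (S : H →L[ℂ] H) : ‖reOp S‖ ≤ numRadius S := by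
  refine selfAdjoint_norm_le (isSelfAdjoint_reOp S) (numRadius_nonneg S) fun x => ?_
  rw [reOp_inner]
  calc ‖((Complex.re ⟪S x, x⟫ : ℝ) : ℂ)‖ = |Complex.re ⟪S x, x⟫| := by simp
    _ ≤ ‖⟪S x, x⟫‖ := by
        simpa using Complex.abs_re_le_norm ⟪S x, x⟫
    _ ≤ numRadius S * ‖x‖ ^ 2 := inner_le_numRadius' S x

lemma reOp_negI (S : H →L[ℂ] H) : reOp ((-Complex.I) • S) = imOp S := by
  rw [reOp, imOp, ← ContinuousLinearMap.star_eq_adjoint, ← ContinuousLinearMap.star_eq_adjoint,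
    star_smul]
  have h1 : star (-Complex.I) = Complex.I := by
    simp [Complex.star_def]
  rw [h1]
  have h2 : ((2 * Complex.I)⁻¹ : ℂ) = 2⁻¹ * -Complex.I := by
    rw [mul_inv, Complex.inv_I]
  rw [h2]
  rw [smul_add, smul_smul, smul_smul, smul_sub]
  have h3 : (2⁻¹ * Complex.I : ℂ) = -(2⁻¹ * -Complex.I) := by ring
  rw [h3, neg_smul, ← sub_eq_add_neg]

lemma numRadius_negI (S : H →L[ℂ] H) : numRadius ((-Complex.I) • S) = numRadius S := by
  unfold numRadius
  congr 1
  funext x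
  have e : ((-Complex.I) • S) (x : H) = (-Complex.I) • S (x : H) := rfl
  rw [e, inner_smul_left, norm_mul]
  simp

lemma norm_negI (S : H →L[ℂ] H) : ‖(-Complex.I) • S‖ = ‖S‖ := by
  rw [norm_smul]; simp

set_option maxHeartbeats 1000000 in
lemma accretive_norm_le {S : H →L[ℂ] H} (hP : (reOp S).IsPositive) :
    ‖S‖ ≤ Real.sqrt 3 * numRadius S := by
  have hω := numRadius_nonneg S
  have hsq : ∀ x : H, ‖x‖ = 1 → ‖S x‖ ^ 2 ≤ 3 * numRadius S ^ 2 := by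
    intro x hx
    have hz : ‖⟪S x, x⟫‖ ≤ numRadius S := inner_le_numRadius S hx
    have ha0 : 0 ≤ Complex.re ⟪S x, x⟫ := by
      have h1 := hP.2 x
      rw [ContinuousLinearMap.reApplyInnerSelf_apply] at h1
      rw [reOp_inner S x] at h1
      simpa [RCLike.re_to_complex] using h1
    have harea : Complex.re ⟪S x, x⟫ ≤ ‖⟪S x, x⟫‖ := by
      simpa using Complex.re_le_norm ⟪S x, x⟫
    have haw : Complex.re ⟪S x, x⟫ ≤ numRadius S := le_trans harea hz
    have h1 : ‖reOp S x‖ ^ 2 ≤ numRadius S * Complex.re ⟪S x, x⟫ := by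
      have hcs := pos_norm_sq_le hP x
      have h2 : Complex.re ⟪reOp S x, x⟫ = Complex.re ⟪S x, x⟫ := by
        rw [reOp_inner]; simp
      rw [h2] at hcs
      have h3 := reOp_norm_le S
      nlinarith [ha0, norm_nonneg (reOp S)]
    have h2 : ‖imOp S x‖ ≤ numRadius S := by
      have hb : ‖imOp S‖ ≤ numRadius S := by
        have := reOp_norm_le ((-Complex.I) • S)
        rwa [reOp_negI, numRadius_negI] at this
      calc ‖imOp S x‖ ≤ ‖imOp S‖ * ‖x‖ := ContinuousLinearMap.le_opNorm _ _
        _ = ‖imOp S‖ := by rw [hx, mul_one]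
        _ ≤ numRadius S := hb
    have h3 : Complex.re ⟪S x, x⟫ ≤ ‖ContinuousLinearMap.adjoint S x‖ := by
      have e : ⟪ContinuousLinearMap.adjoint S x, x⟫ = starRingEnd ℂ ⟪S x, x⟫ := by
        rw [adjoint_inner_left, ← inner_conj_symm]
      calc Complex.re ⟪S x, x⟫ ≤ ‖⟪S x, x⟫‖ := harea
        _ = ‖⟪ContinuousLinearMap.adjoint S x, x⟫‖ := by
              rw [e]; exact (RCLike.norm_conj _).symm
        _ ≤ ‖ContinuousLinearMap.adjoint S x‖ * ‖x‖ := norm_inner_le_norm _ _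
        _ = ‖ContinuousLinearMap.adjoint S x‖ := by rw [hx, mul_one]
    have n1 : ‖S x + ContinuousLinearMap.adjoint S x‖ = 2 * ‖reOp S x‖ := by
      have e : reOp S x = (2⁻¹ : ℂ) • (S x + ContinuousLinearMap.adjoint S x) := by
        simp [reOp]
      rw [e, norm_smul]
      simp
      try ring
    have n2 : ‖S x - ContinuousLinearMap.adjoint S x‖ = 2 * ‖imOp S x‖ := by
      have e : imOp S x = ((2 * Complex.I)⁻¹ : ℂ) •
          (S x - ContinuousLinearMap.adjoint S x) := by
        simp [imOp]
      rw [e, norm_smul]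
      have h5 : ‖((2 * Complex.I)⁻¹ : ℂ)‖ = 2⁻¹ := by simp
      rw [h5]
      ring
    have n1' : ‖S x + ContinuousLinearMap.adjoint S x‖ ^ 2 = 4 * ‖reOp S x‖ ^ 2 := by
      rw [n1]; ring
    have n2' : ‖S x - ContinuousLinearMap.adjoint S x‖ ^ 2 = 4 * ‖imOp S x‖ ^ 2 := by
      rw [n2]; ring
    have par := parallelogram_law_with_norm ℂ (S x) (ContinuousLinearMap.adjoint S x)
    have par' : ‖S x + ContinuousLinearMap.adjoint S x‖ ^ 2
        + ‖S x - ContinuousLinearMap.adjoint S x‖ ^ 2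
        = 2 * (‖S x‖ ^ 2 + ‖ContinuousLinearMap.adjoint S x‖ ^ 2) := by
      exact par
    have hid : ‖S x‖ ^ 2 = 2 * ‖reOp S x‖ ^ 2 + 2 * ‖imOp S x‖ ^ 2
        - ‖ContinuousLinearMap.adjoint S x‖ ^ 2 := by
      rw [n1', n2'] at par'
      linarith
    have h2' : ‖imOp S x‖ ^ 2 ≤ numRadius S ^ 2 := by
      nlinarith [h2, norm_nonneg (imOp S x)]
    have h3' : Complex.re ⟪S x, x⟫ ^ 2 ≤ ‖ContinuousLinearMap.adjoint S x‖ ^ 2 := by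
      nlinarith [h3, ha0]
    have hfin : 2 * (numRadius S * Complex.re ⟪S x, x⟫) - Complex.re ⟪S x, x⟫ ^ 2
        ≤ numRadius S ^ 2 := by
      nlinarith [sq_nonneg (numRadius S - Complex.re ⟪S x, x⟫)]
    linarith [hid, h1, h2', h3', hfin]
  have hrhs : 0 ≤ Real.sqrt 3 * numRadius S :=
    mul_nonneg (Real.sqrt_nonneg 3) (numRadius_nonneg S)
  refine ContinuousLinearMap.opNorm_le_bound S hrhs fun x => ?_
  rcases eq_or_ne x 0 with rfl | hx0
  · simp
  · have hn : 0 < ‖x‖ := norm_pos_iff.2 hx0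
    have hu : ‖((‖x‖ : ℂ))⁻¹ • x‖ = 1 := by
      rw [norm_smul]
      simp [hn.ne']
    have hSu := hsq _ hu
    have hSu' : ‖S (((‖x‖ : ℂ))⁻¹ • x)‖ ≤ Real.sqrt 3 * numRadius S := by
      have h1 : ‖S (((‖x‖ : ℂ))⁻¹ • x)‖ ≤ Real.sqrt (3 * numRadius S ^ 2) :=
        (Real.le_sqrt (norm_nonneg _) (by positivity)).2 hSu
      rwa [Real.sqrt_mul (by norm_num) _, Real.sqrt_sq (numRadius_nonneg S)] at h1
    have hrel : S x = ((‖x‖ : ℂ)) • S (((‖x‖ : ℂ))⁻¹ • x) := by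
      rw [map_smul, smul_smul]
      simp [hn.ne']
    calc ‖S x‖ = ‖x‖ * ‖S (((‖x‖ : ℂ))⁻¹ • x)‖ := by
          rw [hrel, norm_smul]
          simp [_root_.abs_of_nonneg hn.le]
      _ ≤ ‖x‖ * (Real.sqrt 3 * numRadius S) := by nlinarith
      _ = (Real.sqrt 3 * numRadius S) * ‖x‖ := by ring

lemma both_norm_le {S : H →L[ℂ] H}
    (h : (reOp S).IsPositive ∨ (imOp S).IsPositive) :
    ‖S‖ ≤ Real.sqrt 3 * numRadius S := by
  rcases h with h | h
  · exact accretive_norm_le h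
  · have h2 : (reOp ((-Complex.I) • S)).IsPositive := by rw [reOp_negI]; exact h
    have h3 := accretive_norm_le h2
    rwa [norm_negI, numRadius_negI] at h3

end Aux

theorem stmt_15 {H : Type*} [NormedAddCommGroup H] [InnerProductSpace ℂ H] [CompleteSpace H]
    (S T : H →L[ℂ] H) (hS : (reOp S).IsPositive ∨ (imOp S).IsPositive)
    (hT : (reOp T).IsPositive ∨ (imOp T).IsPositive) :
    numRadius (S * T) ≤ 3 * numRadius S * numRadius T := by
  have hS' := both_norm_le hS
  have hT' := both_norm_le hT
  have e : Real.sqrt 3 * Real.sqrt 3 = 3 := Real.mul_self_sqrt (by norm_num)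
  calc numRadius (S * T) ≤ ‖S * T‖ := numRadius_le_norm _
    _ ≤ ‖S‖ * ‖T‖ := norm_mul_le S T
    _ ≤ (Real.sqrt 3 * numRadius S) * (Real.sqrt 3 * numRadius T) :=
        mul_le_mul hS' hT' (norm_nonneg T)
          (mul_nonneg (Real.sqrt_nonneg 3) (numRadius_nonneg S))
    _ = (Real.sqrt 3 * Real.sqrt 3) * (numRadius S * numRadius T) := by ring
    _ = 3 * numRadius S * numRadius T := by rw [e]; ring
end

section
/- Let S be a bounded linear operator on a complex Hilbert space H such that Re S is a positive operator, or Im S is a positive operator. Then ‖S‖² ≤ (1/2)·‖S S* + S* S‖ + ‖Re S‖·‖Im S‖. -/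
section Aux

variable {H : Type*} [NormedAddCommGroup H] [InnerProductSpace ℂ H] [CompleteSpace H]

private lemma sa_norm_le_aux {q : H →L[ℂ] H} {c : ℝ} (hc : 0 ≤ c) (hq : IsSelfAdjoint q)
    (h1 : -(algebraMap ℝ (H →L[ℂ] H) c) ≤ q) (h2 : q ≤ algebraMap ℝ (H →L[ℂ] H) c) :
    ‖q‖ ≤ c := by
  obtain (h | h) := subsingleton_or_nontrivial (H →L[ℂ] H)
  · simpa [Subsingleton.elim q 0] using hc
  · have hub : ∀ k ∈ spectrum ℝ q, k ≤ c :=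
      (le_algebraMap_iff_spectrum_le (a := q)).mp h2
    have hlb : ∀ k ∈ spectrum ℝ q, -c ≤ k := by
      have := (algebraMap_le_iff_le_spectrum (a := q) (r := -c)).mp (by simpa using h1)
      simpa using this
    rcases CStarAlgebra.norm_or_neg_norm_mem_spectrum (a := q) hq with h' | h'
    · exact hub _ h'
    · linarith [hlb _ h']

private lemma comm_norm_le_aux {p : H →L[ℂ] H} (hp : 0 ≤ p) (x : H →L[ℂ] H) :
    ‖p * x - x * p‖ ≤ ‖p‖ * ‖x‖ := by
  set c : ℝ := ‖p‖ / 2 with hc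
  set q : H →L[ℂ] H := p - algebraMap ℝ (H →L[ℂ] H) c with hqdef
  have hpsa : IsSelfAdjoint p := .of_nonneg hp
  have hqsa : IsSelfAdjoint q :=
    hpsa.sub (by simpa using IsSelfAdjoint.algebraMap (H →L[ℂ] H) (r := c) rfl)
  have hq : ‖q‖ ≤ c := by
    apply sa_norm_le_aux (by positivity) hqsa
    · have h2 := sub_le_sub_right hp (algebraMap ℝ (H →L[ℂ] H) c)
      rw [zero_sub] at h2
      exact h2
    · have h3 : p ≤ algebraMap ℝ (H →L[ℂ] H) ‖p‖ := hpsa.le_algebraMap_norm_self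
      have : p - algebraMap ℝ (H →L[ℂ] H) c ≤ algebraMap ℝ (H →L[ℂ] H) (‖p‖ - c) := by
        rw [map_sub]
        exact sub_le_sub_right h3 _
      simpa [hc] using (by rw [show ‖p‖ - c = c by rw [hc]; ring] at this; exact this)
  have key : p * x - x * p = q * x - x * q := by
    simp only [hqdef, sub_mul, mul_sub]
    have : algebraMap ℝ (H →L[ℂ] H) c * x = x * algebraMap ℝ (H →L[ℂ] H) c := by
      exact Algebra.commutes c x
    rw [this]; abel
  calc ‖p * x - x * p‖ = ‖q * x - x * q‖ := by rw [key]
    _ ≤ ‖q * x‖ + ‖x * q‖ := norm_sub_le _ _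
    _ ≤ ‖q‖ * ‖x‖ + ‖x‖ * ‖q‖ := add_le_add (norm_mul_le _ _) (norm_mul_le _ _)
    _ ≤ c * ‖x‖ + ‖x‖ * c := by
        have h0 : (0:ℝ) ≤ ‖x‖ := norm_nonneg x
        nlinarith [norm_nonneg q]
    _ = ‖p‖ * ‖x‖ := by rw [hc]; ring

end Aux

theorem stmt_16 {H : Type*} [NormedAddCommGroup H] [InnerProductSpace ℂ H] [CompleteSpace H]
    (S : H →L[ℂ] H) (hS : (reOp S).IsPositive ∨ (imOp S).IsPositive) :
    ‖S‖ ^ 2 ≤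
      (1 / 2 : ℝ) * ‖S * ContinuousLinearMap.adjoint S + ContinuousLinearMap.adjoint S * S‖ +
        ‖reOp S‖ * ‖imOp S‖ := by
  set T := ContinuousLinearMap.adjoint S with hT
  set A := reOp S with hA
  set B := imOp S with hB
  have hSdec : A + Complex.I • B = S := by
    simp only [hA, hB, reOp, imOp, smul_smul, ← hT]
    rw [show Complex.I * (2*Complex.I)⁻¹ = 2⁻¹ by field_simp [Complex.I_ne_zero]]
    module
  have hTdec : A - Complex.I • B = T := by
    simp only [hA, hB, reOp, imOp, smul_smul, ← hT]
    rw [show Complex.I * (2*Complex.I)⁻¹ = 2⁻¹ by field_simp [Complex.I_ne_zero]]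
    module
  have hTS : T * S = (A*A + B*B) + Complex.I • (A*B - B*A) := by
    rw [← hSdec, ← hTdec]
    simp only [mul_add, add_mul, sub_mul, mul_sub, smul_mul_assoc, mul_smul_comm, smul_smul,
      Complex.I_mul_I, smul_sub, smul_add, neg_smul, one_smul]
    abel
  have hsum : S * T + T * S = (2:ℂ) • (A*A + B*B) := by
    rw [← hSdec, ← hTdec]
    simp only [mul_add, add_mul, sub_mul, mul_sub, smul_mul_assoc, mul_smul_comm, smul_smul,
      Complex.I_mul_I, smul_sub, smul_add, neg_smul, one_smul, two_smul]
    abel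
  have hnormsq : ‖S‖ ^ 2 = ‖T * S‖ := by
    rw [sq, ← ContinuousLinearMap.norm_adjoint_comp_self S]
    rfl
  have hABnorm : ‖A*A + B*B‖ = (1/2 : ℝ) * ‖S * T + T * S‖ := by
    rw [hsum, norm_smul, show ‖(2:ℂ)‖ = 2 by norm_num]
    ring
  have hcomm : ‖A*B - B*A‖ ≤ ‖A‖ * ‖B‖ := by
    rcases hS with h | h
    · exact comm_norm_le_aux ((ContinuousLinearMap.nonneg_iff_isPositive A).mpr h) B
    · calc ‖A*B - B*A‖ = ‖B*A - A*B‖ := by rw [← norm_neg, neg_sub]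
        _ ≤ ‖B‖ * ‖A‖ := comm_norm_le_aux ((ContinuousLinearMap.nonneg_iff_isPositive B).mpr h) A
        _ = ‖A‖ * ‖B‖ := mul_comm _ _
  calc ‖S‖ ^ 2 = ‖T * S‖ := hnormsq
    _ ≤ ‖A*A + B*B‖ + ‖Complex.I • (A*B - B*A)‖ := by rw [hTS]; exact norm_add_le _ _
    _ = (1/2 : ℝ) * ‖S * T + T * S‖ + ‖A*B - B*A‖ := by
        rw [hABnorm, norm_smul, Complex.norm_I, one_mul]
    _ ≤ (1/2 : ℝ) * ‖S * T + T * S‖ + ‖A‖ * ‖B‖ := by linarith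
end
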